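/- arXiv:1610.08156 — 11 statements merged into one kernel-verified Lean document; each statement's English description precedes it below -/
import Mathlib

section
/- Let R be a commutative Noetherian ring with 1 such that the maximal spectrum Max R has dimension d (as a topological space with the Zariski topology), and let A be a finite (not necessarily unital, commutative, or associative) R-algebra, i.e., a finitely generated R-module with an R-bilinear multiplication A × A → A. If for every maximal ideal p of R the algebra A(p) := A ⊗_R R(p) can be generated by n elements as a non-unital R(p)-algebra, then A can be generated by n + d elements as a non-unital R-algebra. -/
set_option linter.unusedSectionVars false
set_option linter.unusedVariables false
set_option linter.unusedTactic false
set_option maxHeartbeats 1000000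


open TensorProduct

/-- `s` generates `A` as a non-unital (non-associative) `R`-algebra: every `R`-submodule of `A`
containing `s` and closed under multiplication is all of `A` (equivalently, the smallest such
submodule is `⊤`). -/
def GeneratesAsNonUnitalAlgebra (R : Type*) {A : Type*} [CommSemiring R]
    [NonUnitalNonAssocSemiring A] [Module R A] (s : Set A) : Prop :=
  ∀ B : Submodule R A, s ⊆ (B : Set A) → (∀ x ∈ B, ∀ y ∈ B, x * y ∈ B) → B = ⊤

namespace FR

variable {R : Type} [CommRing R] {A : Type} [DecidableEq A] [NonUnitalNonAssocRing A]
  [Module R A] [SMulCommClass R A A] [IsScalarTower R A A]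

/-- The smallest `R`-submodule of `A` containing `s` and closed under multiplication. -/
def clo (R : Type) [CommRing R] {A : Type} [NonUnitalNonAssocRing A] [Module R A]
    (s : Set A) : Submodule R A :=
  sInf {B | s ⊆ B ∧ ∀ x ∈ B, ∀ y ∈ B, x * y ∈ B}

lemma subset_clo (s : Set A) : s ⊆ clo R s := fun x hx =>
  Submodule.mem_sInf.2 fun _ hB => hB.1 hx

lemma clo_mulClosed (s : Set A) : ∀ x ∈ clo R s, ∀ y ∈ clo R s, x * y ∈ clo R s := by
  intro x hx y hy
  refine Submodule.mem_sInf.2 fun B hB => hB.2 _ ?_ _ ?_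
  · exact Submodule.mem_sInf.1 hx B hB
  · exact Submodule.mem_sInf.1 hy B hB

lemma clo_le {s : Set A} {B : Submodule R A} (hs : s ⊆ B)
    (hB : ∀ x ∈ B, ∀ y ∈ B, x * y ∈ B) : clo R s ≤ B :=
  sInf_le ⟨hs, hB⟩

lemma clo_mono {s t : Set A} (h : s ⊆ t) : clo R s ≤ clo R t :=
  clo_le (h.trans (subset_clo t)) (clo_mulClosed t)

/-- The "conductor" ideal of a finite generating attempt. -/
def colI (s : Finset A) : Ideal R := (clo R (s : Set A)).colon ⊤

lemma mem_colI {s : Finset A} {r : R} : r ∈ colI (A := A) s ↔ ∀ x : A, r • x ∈ clo R (s : Set A) := by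
  rw [colI, Submodule.mem_colon]
  exact ⟨fun h x => h x trivial, fun h x _ => h x⟩

lemma colI_mono {s t : Finset A} (h : s ⊆ t) : colI (A := A) (R := R) s ≤ colI t := by
  intro r hr
  rw [mem_colI] at hr ⊢
  exact fun x => clo_mono (by exact_mod_cast h) (hr x)

lemma generates_of_colI_top (s : Finset A) (h : colI (R := R) s = ⊤) :
    GeneratesAsNonUnitalAlgebra R (s : Set A) := by
  intro B hsB hB
  have h1 : (1 : R) ∈ colI (R := R) s := h ▸ trivial
  rw [mem_colI] at h1
  rw [eq_top_iff]
  intro x _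
  have := h1 x
  rw [one_smul] at this
  exact clo_le hsB hB this


variable (p : Ideal R) [p.IsMaximal]

local notation "κ" => FractionRing (R ⧸ p)

noncomputable def φ : A →ₗ[R] κ ⊗[R] A := TensorProduct.mk R κ A 1

lemma phi_apply (x : A) : φ p x = (1 : κ) ⊗ₜ[R] x := rfl

lemma phi_mul (x y : A) : φ p (x * y) = φ p x * φ p y := by
  simp only [phi_apply, Algebra.TensorProduct.tmul_mul_tmul, one_mul]

-- scalar/multiplication compatibility on the fiber, proven by hand
lemma smul_mul (c : κ) (x y : κ ⊗[R] A) : (c • x) * y = c • (x * y) := by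
  induction x using TensorProduct.induction_on with
  | zero => simp [zero_mul]
  | tmul c₁ a₁ =>
    induction y using TensorProduct.induction_on with
    | zero => simp [mul_zero]
    | tmul c₂ a₂ =>
      rw [TensorProduct.smul_tmul', smul_eq_mul, Algebra.TensorProduct.tmul_mul_tmul,
        Algebra.TensorProduct.tmul_mul_tmul, TensorProduct.smul_tmul', smul_eq_mul, mul_assoc]
    | add y₁ y₂ h₁ h₂ => rw [mul_add, mul_add, smul_add, h₁, h₂]
  | add x₁ x₂ h₁ h₂ => rw [smul_add, add_mul, add_mul, h₁, h₂, smul_add]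

lemma mul_smul' (c : κ) (x y : κ ⊗[R] A) : x * (c • y) = c • (x * y) := by
  induction x using TensorProduct.induction_on with
  | zero => simp [zero_mul]
  | tmul c₁ a₁ =>
    induction y using TensorProduct.induction_on with
    | zero => simp [mul_zero]
    | tmul c₂ a₂ =>
      rw [TensorProduct.smul_tmul', smul_eq_mul, Algebra.TensorProduct.tmul_mul_tmul,
        Algebra.TensorProduct.tmul_mul_tmul, TensorProduct.smul_tmul', smul_eq_mul,
        mul_left_comm]
    | add y₁ y₂ h₁ h₂ => rw [mul_add, smul_add, mul_add, h₁, h₂, smul_add]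
  | add x₁ x₂ h₁ h₂ => rw [add_mul, add_mul, h₁, h₂, ← smul_add]

lemma algebraMap_kappa_surjective : Function.Surjective (algebraMap R κ) := by
  have hfield : IsField (R ⧸ p) := by
    rw [← Ideal.Quotient.maximal_ideal_iff_isField_quotient]
    infer_instance
  have h1 : Function.Surjective (algebraMap (R ⧸ p) κ) :=
    IsFractionRing.surjective_iff_isField.mpr hfield
  rw [IsScalarTower.algebraMap_eq R (R ⧸ p) κ]
  exact h1.comp Ideal.Quotient.mk_surjective

noncomputable def qe : (R ⧸ p) ≃ₗ[R] κ := by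
  refine LinearEquiv.ofBijective ((Algebra.linearMap (R ⧸ p) κ).restrictScalars R) ⟨?_, ?_⟩
  · exact IsFractionRing.injective (R ⧸ p) κ
  · have hfield : IsField (R ⧸ p) := by
      rw [← Ideal.Quotient.maximal_ideal_iff_isField_quotient]; infer_instance
    exact IsFractionRing.surjective_iff_isField.mpr hfield

lemma qe_apply (x : R ⧸ p) : qe p x = algebraMap (R ⧸ p) κ x := rfl

noncomputable def fibEquiv : (κ ⊗[R] A) ≃ₗ[R] A ⧸ (p • ⊤ : Submodule R A) :=
  (TensorProduct.congr (qe p).symm (LinearEquiv.refl R A)).trans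
    (TensorProduct.quotTensorEquivQuotSMul A p)

lemma fibEquiv_phi (x : A) : fibEquiv p (φ p x) = Submodule.Quotient.mk x := by
  have h1 : (qe p).symm 1 = 1 := by
    rw [LinearEquiv.symm_apply_eq, qe_apply, map_one]
  have h : fibEquiv p (φ p x) =
      TensorProduct.quotTensorEquivQuotSMul A p (((qe p).symm 1) ⊗ₜ[R] x) := rfl
  rw [h, h1]
  have h2 : (1 : R ⧸ p) = Ideal.Quotient.mk p 1 := rfl
  rw [h2, TensorProduct.quotTensorEquivQuotSMul_mk_tmul, one_smul]

lemma ker_phi_le {x : A} (hx : φ p x = 0) : x ∈ (p • ⊤ : Submodule R A) := by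
  have h := fibEquiv_phi p x
  rw [hx, map_zero] at h
  rwa [eq_comm, Submodule.Quotient.mk_eq_zero] at h

/-- generation of the fiber at `p` -/
def FibGen (s : Set A) : Prop :=
  ∀ W : Submodule κ (κ ⊗[R] A), (⇑(φ p) '' s ⊆ ↑W) → (∀ x ∈ W, ∀ y ∈ W, x * y ∈ W) → W = ⊤

lemma fibGen_of_not_le {s : Set A} (h : ¬ ((clo R s).colon ⊤ ≤ p)) : FibGen p s := by
  obtain ⟨a, haC, hap⟩ := SetLike.not_le_iff_exists.mp h
  intro W hsW hWmul
  have hclo : ∀ b ∈ clo R s, φ p b ∈ W := by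
    have hle : clo R s ≤ (W.restrictScalars R).comap (φ p) := by
      apply sInf_le
      constructor
      · intro x hx
        exact hsW ⟨x, hx, rfl⟩
      · intro x hx y hy
        simp only [Submodule.mem_comap, Submodule.restrictScalars_mem] at *
        rw [phi_mul]
        exact hWmul _ hx _ hy
    intro b hb
    exact hle hb
  have ha : (algebraMap R κ a) ≠ 0 := by
    rw [IsScalarTower.algebraMap_apply R (R ⧸ p) κ]
    intro h0
    have h1 := (map_eq_zero_iff _ (IsFractionRing.injective (R ⧸ p) κ)).mp h0
    rw [Ideal.Quotient.algebraMap_eq, Ideal.Quotient.eq_zero_iff_mem] at h1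
    exact hap h1
  have htmul : ∀ (c : κ) (x : A), c ⊗ₜ[R] x ∈ W := by
    intro c x
    have h1 : φ p (a • x) ∈ W := hclo _ (Submodule.mem_colon.mp haC x trivial)
    have key : (c * (algebraMap R κ a)⁻¹) • (φ p (a • x)) = c ⊗ₜ[R] x := by
      rw [phi_apply, TensorProduct.tmul_smul,
        ← algebraMap_smul κ a ((1:κ) ⊗ₜ[R] x), smul_smul, mul_assoc,
        inv_mul_cancel₀ ha, mul_one, TensorProduct.smul_tmul', smul_eq_mul, mul_one]
    rw [← key]
    exact W.smul_mem _ h1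
  rw [eq_top_iff]
  intro z _
  have hle : (⊤ : Submodule R (κ ⊗[R] A)) ≤ W.restrictScalars R := by
    rw [← TensorProduct.span_tmul_eq_top R κ A, Submodule.span_le]
    rintro t ⟨c, x, rfl⟩
    exact htmul c x
  exact hle trivial

lemma not_le_of_fibGen [Module.Finite R A] {s : Set A} (hf : FibGen p s) :
    ¬ ((clo R s).colon ⊤ ≤ p) := by
  set Bc := clo R s with hBc
  set W₀ : Submodule κ (κ ⊗[R] A) := Submodule.span κ (⇑(φ p) '' (Bc : Set A)) with hW₀
  have hgen : ⇑(φ p) '' s ⊆ ↑W₀ := by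
    refine subset_trans (Set.image_mono ?_) Submodule.subset_span
    intro x hx
    exact Submodule.mem_sInf.2 fun B hB => hB.1 hx
  have hmulW₀ : ∀ x ∈ W₀, ∀ y ∈ W₀, x * y ∈ W₀ := by
    intro x hx
    refine Submodule.span_induction ?_ ?_ ?_ ?_ hx
    · rintro g ⟨b, hb, rfl⟩ y hy
      refine Submodule.span_induction ?_ ?_ ?_ ?_ hy
      · rintro g' ⟨b', hb', rfl⟩
        rw [← phi_mul]
        have hbb : b * b' ∈ Bc := by
          rw [hBc]
          refine Submodule.mem_sInf.2 fun B hB => hB.2 _ ?_ _ ?_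
          · exact Submodule.mem_sInf.1 hb B hB
          · exact Submodule.mem_sInf.1 hb' B hB
        exact Submodule.subset_span ⟨_, hbb, rfl⟩
      · rw [mul_zero]; exact W₀.zero_mem
      · intro y₁ y₂ _ _ hy₁ hy₂
        rw [mul_add]; exact W₀.add_mem hy₁ hy₂
      · intro c y₁ _ hy₁
        rw [mul_smul']; exact W₀.smul_mem _ hy₁
    · intro y hy
      rw [zero_mul]; exact W₀.zero_mem
    · intro x₁ x₂ _ _ h₁ h₂ y hy
      rw [add_mul]; exact W₀.add_mem (h₁ y hy) (h₂ y hy)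
    · intro c x₁ _ h₁ y hy
      rw [smul_mul]; exact W₀.smul_mem _ (h₁ y hy)
  have h₀ : W₀ = ⊤ := hf W₀ hgen hmulW₀
  have hU : (⊤ : Submodule R A) ≤ Bc ⊔ (p • ⊤ : Submodule R A) := by
    intro x _
    have hφx : φ p x ∈ W₀ := h₀ ▸ trivial
    have claim : ∀ z, z ∈ W₀ → z ∈ Submodule.map (φ p) (Bc ⊔ (p • ⊤ : Submodule R A)) := by
      intro z hz
      refine Submodule.span_induction ?_ ?_ ?_ ?_ hz
      · rintro g ⟨b, hb, rfl⟩
        exact ⟨b, Submodule.mem_sup_left hb, rfl⟩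
      · exact Submodule.zero_mem _
      · intro z₁ z₂ _ _ h₁ h₂
        exact Submodule.add_mem _ h₁ h₂
      · intro c z₁ _ h₁
        obtain ⟨y, hy, rfl⟩ := h₁
        obtain ⟨r, rfl⟩ := algebraMap_kappa_surjective p c
        rw [algebraMap_smul, ← map_smul]
        exact ⟨r • y, Submodule.smul_mem _ r hy, rfl⟩
    obtain ⟨y, hy, hyx⟩ := claim _ hφx
    have hsub : x - y ∈ (p • ⊤ : Submodule R A) := by
      apply ker_phi_le
      rw [map_sub, hyx, sub_self]
    have : x = y + (x - y) := by abel
    rw [this]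
    exact Submodule.add_mem _ hy (Submodule.mem_sup_right hsub)
  have hfinM : Module.Finite R (A ⧸ Bc) := Module.Finite.of_surjective Bc.mkQ (Submodule.mkQ_surjective Bc)
  have htop : (⊤ : Submodule R (A ⧸ Bc)) ≤ p • (⊤ : Submodule R (A ⧸ Bc)) := by
    intro m _
    obtain ⟨x, rfl⟩ := Submodule.mkQ_surjective Bc m
    have hx : x ∈ Bc ⊔ (p • ⊤ : Submodule R A) := hU trivial
    obtain ⟨b, hb, z, hz, rfl⟩ := Submodule.mem_sup.mp hx
    rw [map_add]
    have h1 : Bc.mkQ b = 0 := (Submodule.Quotient.mk_eq_zero _).mpr hb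
    rw [h1, zero_add]
    have h2 : Bc.mkQ z ∈ Submodule.map Bc.mkQ (p • (⊤ : Submodule R A)) := ⟨z, hz, rfl⟩
    rw [Submodule.map_smul''] at h2
    exact Submodule.smul_mono le_rfl le_top h2
  obtain ⟨r, hr1, hr0⟩ :=
    Submodule.exists_sub_one_mem_and_smul_eq_zero_of_fg_of_le_smul p ⊤ Module.Finite.fg_top htop
  refine SetLike.not_le_iff_exists.mpr ⟨r, ?_, ?_⟩
  · rw [Submodule.mem_colon]
    intro x _
    have h3 := hr0 (Bc.mkQ x) trivial
    rw [← map_smul, Submodule.mkQ_apply, Submodule.Quotient.mk_eq_zero] at h3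
    exact h3
  · intro hrp
    have h4 : (1 : R) ∈ p := by
      have := p.sub_mem hrp hr1
      simpa using this
    exact Ideal.IsMaximal.ne_top ‹p.IsMaximal› (Ideal.eq_top_iff_one p |>.mpr h4)


section Good

/-- `q` is "good at level `j`" for `s`: some `≤ j` additional elements make the conductor
not contained in `q`. -/
def Good (q : Ideal R) (j : ℕ) (s : Finset A) : Prop :=
  ∃ t : Finset A, t.card ≤ j ∧ ¬ (colI (R := R) (s ∪ t) ≤ q)

lemma Good.mono_j {q : Ideal R} {j j' : ℕ} {s : Finset A} (h : Good q j s) (hj : j ≤ j') :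
    Good q j' s := by
  obtain ⟨t, ht, hcol⟩ := h
  exact ⟨t, ht.trans hj, hcol⟩

lemma Good.mono_s {q : Ideal R} {j : ℕ} {s s' : Finset A} (h : Good q j s) (hs : s ⊆ s') :
    Good q j s' := by
  obtain ⟨t, ht, hcol⟩ := h
  refine ⟨t, ht, fun hle => hcol (le_trans (colI_mono ?_) hle)⟩
  exact Finset.union_subset_union hs (Finset.Subset.refl t)

/-- the minimal good level -/
noncomputable def gval (q : Ideal R) (s : Finset A) : ℕ := sInf {j | Good q j s}

lemma gval_good {q : Ideal R} {s : Finset A} (hne : ∃ j, Good q j s) : Good q (gval q s) s :=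
  Nat.sInf_mem hne

lemma gval_le {q : Ideal R} {s : Finset A} {j : ℕ} (h : Good q j s) : gval q s ≤ j :=
  Nat.sInf_le h

lemma lt_gval_of_not_good {q : Ideal R} {s : Finset A} {j : ℕ} (hne : ∃ j, Good q j s)
    (h : ¬ Good q j s) : j < gval q s := by
  by_contra hlt
  push_neg at hlt
  exact h ((gval_good hne).mono_j hlt)

variable [Module.Finite R A]

lemma phi_surjective (p : Ideal R) [p.IsMaximal] :
    Function.Surjective (φ p : A →ₗ[R] (FractionRing (R ⧸ p)) ⊗[R] A) := by
  intro z
  obtain ⟨x, hx⟩ := Submodule.Quotient.mk_surjective (p • ⊤ : Submodule R A) (fibEquiv p z)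
  refine ⟨x, (fibEquiv p).injective ?_⟩
  rw [fibEquiv_phi, hx]

/-- from the fiber generation hypothesis: every maximal ideal is good at level `n` -/
lemma good_of_hyp {n : ℕ}
    (h : ∀ (p : Ideal R), p.IsMaximal →
      ∃ sf : Finset (FractionRing (R ⧸ p) ⊗[R] A), sf.card ≤ n ∧
        GeneratesAsNonUnitalAlgebra (FractionRing (R ⧸ p))
          (sf : Set (FractionRing (R ⧸ p) ⊗[R] A)))
    (p : Ideal R) [hp : p.IsMaximal] (s : Finset A) : Good p n s := by
  obtain ⟨sf, hcard, hgen⟩ := h p hp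
  have hlift : ∀ z : FractionRing (R ⧸ p) ⊗[R] A, ∃ x : A, φ p x = z := phi_surjective p
  choose g hg using hlift
  refine ⟨sf.image g, le_trans (Finset.card_image_le) hcard, ?_⟩
  have hfib : FibGen p ((sf.image g : Finset A) : Set A) := by
    intro W hW hmul
    refine hgen W ?_ hmul
    intro z hz
    have : φ p (g z) ∈ W := hW ⟨g z, by simpa using ⟨z, hz, rfl⟩, rfl⟩
    rwa [hg] at this
  have hn := not_le_of_fibGen p hfib
  intro hle
  exact hn (le_trans (colI_mono Finset.subset_union_right) hle)

/-- the simultaneous improvement element -/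
lemma exists_improving (P : Finset (MaximalSpectrum R)) (s : Finset A)
    (hne : ∀ p : MaximalSpectrum R, ∃ j, Good p.asIdeal j s) :
    ∃ c : A, ∀ p ∈ P, 1 ≤ gval p.asIdeal s →
      Good p.asIdeal (gval p.asIdeal s - 1) (insert c s) := by
  classical
  have hwit : ∀ p : MaximalSpectrum R, 1 ≤ gval p.asIdeal s →
      ∃ t : Finset A, t.card ≤ gval p.asIdeal s ∧ ¬ (colI (R := R) (s ∪ t) ≤ p.asIdeal)
        ∧ t.Nonempty := by
    intro p hp1
    obtain ⟨t, ht, hcol⟩ := gval_good (hne p)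
    refine ⟨t, ht, hcol, ?_⟩
    rcases Finset.eq_empty_or_nonempty t with rfl | hne'
    · exfalso
      have h0 : Good p.asIdeal 0 s := ⟨∅, le_refl _, hcol⟩
      have := gval_le h0
      omega
    · exact hne'
  choose tw htw1 htw2 htw3 using hwit
  have hsep : ∀ p ∈ P, ∃ r : R, (∀ q ∈ P, p ≠ q → r ∈ q.asIdeal) ∧ r ∉ p.asIdeal := by
    intro p hp
    have hnle : ¬ ((P.erase p).inf (fun q => q.asIdeal) ≤ p.asIdeal) := by
      intro hle
      obtain ⟨q, hq, hqle⟩ := (Ideal.IsPrime.inf_le' (Ideal.IsMaximal.isPrime p.isMaximal)).mp hle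
      have h1 : q.asIdeal = p.asIdeal :=
        (q.isMaximal.eq_of_le (Ideal.IsMaximal.ne_top p.isMaximal) hqle)
      have h2 : q = p := MaximalSpectrum.ext h1
      exact (Finset.ne_of_mem_erase hq) h2
    obtain ⟨r, hr1, hr2⟩ := SetLike.not_le_iff_exists.mp hnle
    refine ⟨r, ?_, hr2⟩
    intro q hq hqp
    have hle : (P.erase p).inf (fun q => q.asIdeal) ≤ q.asIdeal :=
      Finset.inf_le (Finset.mem_erase.mpr ⟨fun h => hqp h.symm, hq⟩)
    exact hle hr1
  choose rr hrr1 hrr2 using hsep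
  set cc : (p : MaximalSpectrum R) → A := fun p =>
    if h1 : 1 ≤ gval p.asIdeal s then (htw3 p h1).choose else 0 with hcc
  set rrr : (p : MaximalSpectrum R) → R := fun p =>
    if hp : p ∈ P then rr p hp else 0 with hrrr
  set c : A := P.sum (fun p => rrr p • cc p) with hc
  refine ⟨c, ?_⟩
  intro p hp hp1
  have hker : ∀ (a : R), a ∈ p.asIdeal → ∀ y : A,
      a • (φ p.asIdeal y : FractionRing (R ⧸ p.asIdeal) ⊗[R] A) = 0 := by
    intro a ha y
    rw [← algebraMap_smul (FractionRing (R ⧸ p.asIdeal)) a (φ p.asIdeal y),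
      IsScalarTower.algebraMap_apply R (R ⧸ p.asIdeal) (FractionRing (R ⧸ p.asIdeal)),
      Ideal.Quotient.algebraMap_eq, (Ideal.Quotient.eq_zero_iff_mem).mpr ha,
      map_zero, zero_smul]
  have hu : (algebraMap R (FractionRing (R ⧸ p.asIdeal)) (rr p hp)) ≠ 0 := by
    rw [IsScalarTower.algebraMap_apply R (R ⧸ p.asIdeal) (FractionRing (R ⧸ p.asIdeal))]
    intro h0
    have h1 := (map_eq_zero_iff _ (IsFractionRing.injective (R ⧸ p.asIdeal)
      (FractionRing (R ⧸ p.asIdeal)))).mp h0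
    rw [Ideal.Quotient.algebraMap_eq, Ideal.Quotient.eq_zero_iff_mem] at h1
    exact hrr2 p hp h1
  have hphic : φ p.asIdeal c =
      (algebraMap R (FractionRing (R ⧸ p.asIdeal)) (rr p hp)) • φ p.asIdeal (cc p) := by
    rw [hc, map_sum, Finset.sum_eq_single p]
    · rw [map_smul]
      have : rrr p = rr p hp := by rw [hrrr]; simp [hp]
      rw [this, algebraMap_smul]
    · intro q hq hqp
      rw [map_smul]
      have : rrr q = rr q hq := by rw [hrrr]; simp [hq]
      rw [this]
      exact hker _ (hrr1 q hq p hp hqp) _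
    · intro habs
      exact absurd hp habs
  set cp : A := cc p with hcpdef
  have hcp_mem : cp ∈ tw p hp1 := by
    rw [hcpdef, hcc]
    simp only [hp1, dif_pos]
    exact (htw3 p hp1).choose_spec
  have hfib0 : FibGen p.asIdeal ((s ∪ tw p hp1 : Finset A) : Set A) :=
    fibGen_of_not_le p.asIdeal (htw2 p hp1)
  have hfib1 : FibGen p.asIdeal ((insert c (s ∪ (tw p hp1).erase cp) : Finset A) : Set A) := by
    intro W hW hmul
    refine hfib0 W ?_ hmul
    intro z hz
    obtain ⟨b, hb, rfl⟩ := hz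
    simp only [Finset.coe_union, Set.mem_union, Finset.mem_coe] at hb
    rcases hb with hb | hb
    · exact hW ⟨b, by simp [hb], rfl⟩
    · by_cases hbc : b = cp
      · rw [hbc]
        have hcin : φ p.asIdeal c ∈ W := hW ⟨c, by simp, rfl⟩
        have heq : φ p.asIdeal cp =
            (algebraMap R (FractionRing (R ⧸ p.asIdeal)) (rr p hp))⁻¹ • φ p.asIdeal c := by
          rw [hphic, smul_smul, inv_mul_cancel₀ hu, one_smul]
        rw [heq]
        exact W.smul_mem _ hcin
      · refine hW ⟨b, ?_, rfl⟩
        simp only [Finset.coe_insert, Set.mem_insert_iff, Finset.coe_union, Set.mem_union,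
          Finset.mem_coe, Finset.mem_erase]
        exact Or.inr (Or.inr ⟨hbc, hb⟩)
  have hnotle := not_le_of_fibGen p.asIdeal hfib1
  refine ⟨(tw p hp1).erase cp, ?_, ?_⟩
  · have h1 : ((tw p hp1).erase cp).card = (tw p hp1).card - 1 :=
      Finset.card_erase_of_mem hcp_mem
    have h2 := htw1 p hp1
    omega
  · intro hle
    have hset : (insert c (s ∪ (tw p hp1).erase cp) : Finset A) =
        (insert c s) ∪ (tw p hp1).erase cp := by
      ext x
      simp only [Finset.mem_union, Finset.mem_insert, Finset.mem_erase]
      tauto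
    rw [hset] at hnotle
    exact hnotle hle
end Good

section Topology

open TopologicalSpace

/-- the bad locus at level `j` -/
def Zset (j : ℕ) (s : Finset A) : Set (MaximalSpectrum R) := {p | ¬ Good p.asIdeal j s}

lemma Zset_anti {j : ℕ} {s s' : Finset A} (hss : s ⊆ s') :
    Zset (R := R) j s' ⊆ Zset j s := by
  intro p hp hg
  exact hp (hg.mono_s hss)

lemma isClosed_Zset (j : ℕ) (s : Finset A) : IsClosed (Zset (R := R) j s) := by
  have heq : Zset (R := R) j s = ⋂ (t : Finset A), ⋂ (_ : t.card ≤ j),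
      MaximalSpectrum.toPrimeSpectrum ⁻¹'
        (PrimeSpectrum.zeroLocus (colI (R := R) (s ∪ t) : Set R)) := by
    ext p
    simp only [Zset, Set.mem_setOf_eq, Good, Set.mem_iInter, Set.mem_preimage,
      PrimeSpectrum.mem_zeroLocus]
    push_neg
    constructor
    · intro h t ht
      exact h t ht
    · intro h t ht
      exact h t ht
  rw [heq]
  exact isClosed_iInter fun t => isClosed_iInter fun _ =>
    (PrimeSpectrum.isClosed_zeroLocus _).preimage MaximalSpectrum.toPrimeSpectrum_continuous

lemma noethX [IsNoetherianRing R] : NoetherianSpace (MaximalSpectrum R) := by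
  have h : Topology.IsInducing (MaximalSpectrum.toPrimeSpectrum (R := R)) := ⟨rfl⟩
  exact h.noetherianSpace

/-- the (images of the) irreducible components of a subset of the maximal spectrum -/
def compSet (Z : Set (MaximalSpectrum R)) : Set (Set (MaximalSpectrum R)) :=
  (Set.image (Subtype.val : ↥Z → MaximalSpectrum R)) '' (irreducibleComponents ↥Z)

lemma compSet_finite [IsNoetherianRing R] (Z : Set (MaximalSpectrum R)) :
    (compSet Z).Finite := by
  haveI := noethX (R := R)
  exact (NoetherianSpace.finite_irreducibleComponents (α := ↥Z)).image _

lemma irred_preimage {Z Y : Set (MaximalSpectrum R)} (hY : IsIrreducible Y) (hYZ : Y ⊆ Z) :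
    IsIrreducible (Subtype.val ⁻¹' Y : Set ↥Z) := by
  constructor
  · obtain ⟨y, hy⟩ := hY.nonempty
    exact ⟨⟨y, hYZ hy⟩, hy⟩
  · rintro U V hU hV ⟨x, hxY, hxU⟩ ⟨y, hyY, hyV⟩
    obtain ⟨U', hU', rfl⟩ := isOpen_induced_iff.mp hU
    obtain ⟨V', hV', rfl⟩ := isOpen_induced_iff.mp hV
    obtain ⟨z, hzY, hzU, hzV⟩ := hY.2 U' V' hU' hV' ⟨x.1, hxY, hxU⟩ ⟨y.1, hyY, hyV⟩
    exact ⟨⟨z, hYZ hzY⟩, hzY, hzU, hzV⟩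

lemma compSet_cover {Z Y : Set (MaximalSpectrum R)} (hY : IsIrreducible Y) (hYZ : Y ⊆ Z) :
    ∃ C ∈ compSet Z, Y ⊆ C := by
  have hirr := irred_preimage hY hYZ
  obtain ⟨t, htpre, hsub, hmax⟩ := exists_preirreducible _ hirr.2
  have htirr : IsIrreducible t := ⟨hirr.1.mono hsub, htpre⟩
  have htmem : t ∈ irreducibleComponents ↥Z := by
    refine ⟨htirr, ?_⟩
    intro u hu htu
    exact le_of_eq (hmax u hu.2 htu)
  refine ⟨Subtype.val '' t, ⟨t, htmem, rfl⟩, ?_⟩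
  intro y hy
  exact ⟨⟨y, hYZ hy⟩, hsub hy, rfl⟩

lemma compSet_spec {Z : Set (MaximalSpectrum R)} (hZ : IsClosed Z)
    {C : Set (MaximalSpectrum R)} (hC : C ∈ compSet Z) :
    IsIrreducible C ∧ IsClosed C ∧ C ⊆ Z := by
  obtain ⟨c, hc, rfl⟩ := hC
  refine ⟨hc.1.image _ continuous_subtype_val.continuousOn, ?_, ?_⟩
  · exact (hZ.isClosedEmbedding_subtypeVal.isClosedMap) _
      (isClosed_of_mem_irreducibleComponents _ hc)
  · rintro x ⟨x', _, rfl⟩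
    exact x'.2

lemma exists_min_gval (s : Finset A) {C : Set (MaximalSpectrum R)} (hC : C.Nonempty) :
    ∃ p₀ ∈ C, ∀ p ∈ C, gval p₀.asIdeal s ≤ gval p.asIdeal s := by
  have hS : ((fun p : MaximalSpectrum R => gval p.asIdeal s) '' C).Nonempty := hC.image _
  obtain ⟨p₀, hp₀C, heq⟩ := Nat.sInf_mem hS
  refine ⟨p₀, hp₀C, fun p hp => ?_⟩
  have h2 : gval p₀.asIdeal s = sInf ((fun p : MaximalSpectrum R => gval p.asIdeal s) '' C) := heq
  rw [h2]
  exact Nat.sInf_le ⟨p, hp, rfl⟩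

lemma length_le_of_dim {d : ℕ} (hd : topologicalKrullDim (MaximalSpectrum R) = d)
    (l : LTSeries (IrreducibleCloseds (MaximalSpectrum R))) : l.length ≤ d := by
  have h := Order.LTSeries.length_le_krullDim l
  rw [topologicalKrullDim] at hd
  rw [hd] at h
  exact_mod_cast h

theorem main_ind [IsNoetherianRing R] [Module.Finite R A] [Nontrivial R] (n : ℕ)
    (hgood : ∀ (p : MaximalSpectrum R) (s : Finset A), Good p.asIdeal n s) :
    ∀ (k : ℕ) (s : Finset A),
      (∀ (j : ℕ) (l : LTSeries (IrreducibleCloseds (MaximalSpectrum R))),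
          (l.last : Set (MaximalSpectrum R)) ⊆ Zset j s → j + l.length < k) →
      ∃ s' : Finset A, s ⊆ s' ∧ s'.card ≤ s.card + k ∧
        ∀ p : MaximalSpectrum R, Good p.asIdeal 0 s' := by
  intro k
  induction k with
  | zero =>
    intro s H
    refine ⟨s, Finset.Subset.refl s, by omega, ?_⟩
    intro p
    by_contra hbad
    have hYsub : (closure {p} : Set (MaximalSpectrum R)) ⊆ Zset 0 s :=
      closure_minimal (by intro x hx; rw [Set.mem_singleton_iff] at hx; subst hx; exact hbad)
        (isClosed_Zset 0 s)
    have h0 := H 0 (RelSeries.singleton _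
      (⟨closure {p}, isIrreducible_singleton.closure, isClosed_closure⟩ :
        IrreducibleCloseds (MaximalSpectrum R))) hYsub
    omega
  | succ k IH =>
    intro s H
    classical
    have hneA : ∀ p : MaximalSpectrum R, ∃ j, Good p.asIdeal j s := fun p => ⟨n, hgood p s⟩
    set pickF : Set (MaximalSpectrum R) → MaximalSpectrum R := fun C =>
      if h : C.Nonempty then (exists_min_gval s h).choose else Classical.arbitrary _ with hpickF
    set PS : Set (MaximalSpectrum R) :=
      ⋃ j ∈ Set.Iic k, pickF '' (compSet (Zset (R := R) j s)) with hPS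
    have hPSfin : PS.Finite :=
      Set.Finite.biUnion (Set.finite_Iic k) (fun j _ => Set.Finite.image _ (compSet_finite _))
    obtain ⟨c, hc⟩ := exists_improving hPSfin.toFinset s hneA
    have H' : ∀ (j : ℕ) (l : LTSeries (IrreducibleCloseds (MaximalSpectrum R))),
        (l.last : Set (MaximalSpectrum R)) ⊆ Zset j (insert c s) → j + l.length < k := by
      intro j l hlast
      have hlast_old : (l.last : Set (MaximalSpectrum R)) ⊆ Zset j s :=
        fun p hp => Zset_anti (Finset.subset_insert c s) (hlast hp)
      have hk1 := H j l hlast_old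
      rcases Nat.lt_or_ge (j + l.length) k with hlt | hge
      · exact hlt
      exfalso
      have heqk : j + l.length = k := by omega
      have hYirr : IsIrreducible (l.last : Set (MaximalSpectrum R)) := l.last.isIrreducible
      obtain ⟨C, hCmem, hYC⟩ := compSet_cover hYirr hlast_old
      obtain ⟨hCirr, hCclosed, hCsub⟩ := compSet_spec (isClosed_Zset j s) hCmem
      by_cases hYeq : (l.last : Set (MaximalSpectrum R)) = C
      · have hCne : C.Nonempty := hCirr.nonempty
        have hp₀spec : pickF C ∈ C ∧ ∀ p ∈ C, gval (pickF C).asIdeal s ≤ gval p.asIdeal s := by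
          rw [hpickF]
          simp only [hCne, dif_pos]
          exact ⟨(exists_min_gval s hCne).choose_spec.1, (exists_min_gval s hCne).choose_spec.2⟩
        set p₀ := pickF C with hp₀def
        have hp₀P : p₀ ∈ hPSfin.toFinset := by
          rw [Set.Finite.mem_toFinset, hPS]
          refine Set.mem_biUnion (show j ∈ Set.Iic k from by
            simp only [Set.mem_Iic]; omega) ?_
          exact ⟨C, hCmem, rfl⟩
        have hp₀last : p₀ ∈ (l.last : Set (MaximalSpectrum R)) := by
          rw [hYeq]; exact hp₀spec.1
        have hnotgood_new : ¬ Good p₀.asIdeal j (insert c s) := hlast hp₀last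
        have hnotgood_old : ¬ Good p₀.asIdeal j s := hlast_old hp₀last
        have hgge : j < gval p₀.asIdeal s := lt_gval_of_not_good (hneA p₀) hnotgood_old
        by_cases hcase : gval p₀.asIdeal s = j + 1
        · have himp := hc p₀ hp₀P (by omega)
          rw [hcase] at himp
          simp only [Nat.add_sub_cancel] at himp
          exact hnotgood_new himp
        · have hgge2 : j + 2 ≤ gval p₀.asIdeal s := by omega
          have hCsub2 : C ⊆ Zset (gval p₀.asIdeal s - 1) s := by
            intro p hpC
            simp only [Zset, Set.mem_setOf_eq]
            intro hgp
            have h1 := gval_le hgp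
            have h2 := hp₀spec.2 p hpC
            omega
          have h3 := H (gval p₀.asIdeal s - 1) l (by rw [hYeq]; exact hCsub2)
          omega
      · have hlt : l.last < (⟨C, hCirr, hCclosed⟩ : IrreducibleCloseds (MaximalSpectrum R)) := by
          refine lt_of_le_of_ne hYC ?_
          intro hh
          exact hYeq (congrArg _ hh)
        have h4 := H j (l.snoc _ hlt) (by rw [RelSeries.last_snoc]; exact hCsub)
        rw [RelSeries.snoc_length] at h4
        omega
    obtain ⟨s', hs'1, hs'2, hs'3⟩ := IH (insert c s) H'
    refine ⟨s', (Finset.subset_insert c s).trans hs'1, ?_, hs'3⟩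
    have h5 := Finset.card_insert_le c s
    omega

end Topology

end FR

/-- Main theorem: if dim Max R = d and the finite (not necessarily unital, commutative or
associative) R-algebra A is such that A(p) is generated by n elements as a non-unital
R(p)-algebra for every maximal ideal p, then A is generated by n + d elements. -/
theorem main_theorem (R : Type) [CommRing R] [IsNoetherianRing R] (d n : ℕ)
    (hd : topologicalKrullDim (MaximalSpectrum R) = d)
    (A : Type) [NonUnitalNonAssocRing A] [Module R A]
    [SMulCommClass R A A] [IsScalarTower R A A] [Module.Finite R A]
    (h : ∀ (p : Ideal R), p.IsMaximal →
      ∃ s : Finset (FractionRing (R ⧸ p) ⊗[R] A), s.card ≤ n ∧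
        GeneratesAsNonUnitalAlgebra (FractionRing (R ⧸ p))
          (s : Set (FractionRing (R ⧸ p) ⊗[R] A))) :
    ∃ s : Finset A, s.card ≤ n + d ∧ GeneratesAsNonUnitalAlgebra R (s : Set A) := by
  classical
  rcases subsingleton_or_nontrivial R with hR | hR
  · refine ⟨∅, by simp, ?_⟩
    intro B _ _
    have hB : ∀ x : A, x ∈ B := by
      intro x
      have hx : x = 0 := by
        calc x = (1 : R) • x := (one_smul R x).symm
        _ = (0 : R) • x := by rw [Subsingleton.elim (1 : R) (0 : R)]
        _ = 0 := zero_smul R x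
      rw [hx]
      exact B.zero_mem
    exact eq_top_iff.mpr fun x _ => hB x
  · haveI := Classical.decEq A
    have hgood : ∀ (p : MaximalSpectrum R) (s : Finset A), FR.Good p.asIdeal n s := by
      intro p s
      exact FR.good_of_hyp h p.asIdeal s
    have Hinit : ∀ (j : ℕ)
        (l : LTSeries (TopologicalSpace.IrreducibleCloseds (MaximalSpectrum R))),
        (l.last : Set (MaximalSpectrum R)) ⊆ FR.Zset j (∅ : Finset A) → j + l.length < n + d := by
      intro j l hlast
      have hlen := FR.length_le_of_dim hd l
      obtain ⟨p, hp⟩ := l.last.isIrreducible.nonempty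
      have hpz : p ∈ FR.Zset (R := R) j (∅ : Finset A) := hlast hp
      have hjn : j < n := by
        by_contra hj
        push_neg at hj
        exact hpz ((hgood p ∅).mono_j hj)
      omega
    obtain ⟨s', _, hcard, hgood0⟩ := FR.main_ind n hgood (n + d) ∅ Hinit
    refine ⟨s', by simpa using hcard, ?_⟩
    have hcol : FR.colI (R := R) s' = ⊤ := by
      by_contra hne
      obtain ⟨m, hm, hle⟩ := Ideal.exists_le_maximal _ hne
      obtain ⟨t, ht0, hcolt⟩ := hgood0 ⟨m, hm⟩
      have ht : t = ∅ := Finset.card_eq_zero.mp (le_antisymm ht0 (Nat.zero_le _))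
      subst ht
      rw [Finset.union_empty] at hcolt
      exact hcolt hle
    exact FR.generates_of_colI_top s' hcol
end

section
/- Let R be a commutative Noetherian ring with 1 and let A be a finite (not necessarily unital, associative, or commutative) R-algebra. Elements a_1, ..., a_n of A generate A as a non-unital R-algebra if and only if for every maximal ideal p of R, the images a_1(p), ..., a_n(p) in A(p) := A ⊗_R R(p) generate A(p) as a non-unital R(p)-algebra. -/
open TensorProduct

/-- Products of elements of the span of a multiplicatively closed set lie in the span. -/
lemma mul_mem_span_of_mul_closed {k T : Type*} [CommSemiring k] [NonUnitalNonAssocSemiring T]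
    [Module k T] [SMulCommClass k T T] [IsScalarTower k T T] {S : Set T}
    (hS : ∀ x ∈ S, ∀ y ∈ S, x * y ∈ S) :
    ∀ x ∈ Submodule.span k S, ∀ y ∈ Submodule.span k S, x * y ∈ Submodule.span k S := by
  intro x hx y hy
  have hmem : x * y ∈ Submodule.map₂ (LinearMap.mul k T) (Submodule.span k S)
      (Submodule.span k S) := Submodule.apply_mem_map₂ _ hx hy
  rw [Submodule.map₂_span_span] at hmem
  refine Submodule.span_mono ?_ hmem
  rintro _ ⟨u, hu, v, hv, rfl⟩
  exact hS u hu v hv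

set_option maxHeartbeats 1000000 in
/-- Lemma 2.1: elements a₁, ..., aₙ generate the finite R-algebra A iff their images generate
A(p) over R(p) for every maximal ideal p. -/
theorem generate_iff_locally_generate (R : Type) [CommRing R] [IsNoetherianRing R]
    (A : Type) [NonUnitalNonAssocRing A] [Module R A]
    [SMulCommClass R A A] [IsScalarTower R A A] [Module.Finite R A]
    (n : ℕ) (a : Fin n → A) :
    GeneratesAsNonUnitalAlgebra R (Set.range a) ↔
      ∀ (p : Ideal R), p.IsMaximal →
        GeneratesAsNonUnitalAlgebra (FractionRing (R ⧸ p))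
          (Set.range fun i => ((1 : FractionRing (R ⧸ p)) ⊗ₜ[R] a i)) := by
  classical
  constructor
  · -- easy direction
    intro h p hp B' hsub hclosed
    set k := FractionRing (R ⧸ p)
    set f : A →ₗ[R] k ⊗[R] A := TensorProduct.mk R k A 1 with hf
    have hB : ((B'.restrictScalars R).comap f) = ⊤ := by
      apply h
      · rintro _ ⟨i, rfl⟩
        exact hsub ⟨i, rfl⟩
      · intro x hx y hy
        simp only [Submodule.mem_comap, Submodule.restrictScalars_mem, hf,
          TensorProduct.mk_apply] at hx hy ⊢
        have := hclosed _ hx _ hy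
        rwa [Algebra.TensorProduct.tmul_mul_tmul, one_mul] at this
    have hall : ∀ x : A, (1 : k) ⊗ₜ[R] x ∈ B' := by
      intro x
      have hx : x ∈ ((B'.restrictScalars R).comap f) := hB ▸ Submodule.mem_top
      exact hx
    rw [eq_top_iff]
    rintro z -
    induction z using TensorProduct.induction_on with
    | zero => exact B'.zero_mem
    | tmul c x =>
        have hcx : c ⊗ₜ[R] x = c • ((1 : k) ⊗ₜ[R] x) := by
          rw [TensorProduct.smul_tmul', smul_eq_mul, mul_one]
        rw [hcx]
        exact B'.smul_mem c (hall x)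
    | add u v hu hv => exact B'.add_mem hu hv
  · -- hard direction
    intro h
    set C := sInf {B : Submodule R A | Set.range a ⊆ B ∧ ∀ x ∈ B, ∀ y ∈ B, x * y ∈ B} with hCdef
    have hCsub : Set.range a ⊆ (C : Set A) := fun x hx =>
      Submodule.mem_sInf.2 fun B hB => hB.1 hx
    have hCmul : ∀ x ∈ C, ∀ y ∈ C, x * y ∈ C := fun x hx y hy =>
      Submodule.mem_sInf.2 fun B hB =>
        hB.2 x (Submodule.mem_sInf.1 hx B hB) y (Submodule.mem_sInf.1 hy B hB)
    suffices hCtop : C = ⊤ by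
      intro B hsub hcl
      exact top_unique (hCtop ▸ (sInf_le ⟨hsub, hcl⟩ : C ≤ B))
    by_contra hne
    set M := A ⧸ C with hM
    haveI : Nontrivial M :=
      Submodule.Quotient.nontrivial_iff.2 (lt_top_iff_ne_top.2 hne).ne
    have hann : Module.annihilator R M ≠ ⊤ := by
      intro htop
      obtain ⟨m, m0⟩ := exists_ne (0 : M)
      have h1 : (1 : R) ∈ Module.annihilator R M := htop ▸ Submodule.mem_top
      have := Module.mem_annihilator.mp h1 m
      rw [one_smul] at this
      exact m0 this
    obtain ⟨p, hp, hle⟩ := Ideal.exists_le_maximal _ hann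
    set k := FractionRing (R ⧸ p)
    set S : Set (k ⊗[R] A) := (fun x : A => (1 : k) ⊗ₜ[R] x) '' C with hSdef
    have hB' : Submodule.span k S = ⊤ := by
      apply h p hp
      · rintro _ ⟨i, rfl⟩
        exact Submodule.subset_span ⟨a i, hCsub ⟨i, rfl⟩, rfl⟩
      · refine mul_mem_span_of_mul_closed ?_
        rintro _ ⟨u, hu, rfl⟩ _ ⟨v, hv, rfl⟩
        exact ⟨u * v, hCmul u hu v hv, by
          rw [Algebra.TensorProduct.tmul_mul_tmul, one_mul]⟩
    set π : k ⊗[R] A →ₗ[k] k ⊗[R] M := LinearMap.baseChange k C.mkQ with hπ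
    have hπsurj : Function.Surjective π := by
      intro z
      induction z using TensorProduct.induction_on with
      | zero => exact ⟨0, map_zero π⟩
      | tmul c m =>
          obtain ⟨x, rfl⟩ := C.mkQ_surjective m
          exact ⟨c ⊗ₜ[R] x, by rw [hπ, LinearMap.baseChange_tmul]⟩
      | add u v hu hv =>
          obtain ⟨x, rfl⟩ := hu
          obtain ⟨y, rfl⟩ := hv
          exact ⟨x + y, map_add π x y⟩
    have himg : π '' S ⊆ {0} := by
      rintro _ ⟨_, ⟨x, hx, rfl⟩, rfl⟩
      have hx0 : C.mkQ x = 0 := (Submodule.Quotient.mk_eq_zero C).2 hx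
      simp [hπ, LinearMap.baseChange_tmul, hx0]
    have hmapbot : Submodule.map π (Submodule.span k S) = ⊥ := by
      rw [Submodule.map_span]
      refine le_bot_iff.1 (Submodule.span_le.2 fun z hz => ?_)
      have hz0 := himg hz
      simpa using hz0
    have hzero : ∀ z : k ⊗[R] M, z = 0 := by
      intro z
      obtain ⟨w, rfl⟩ := hπsurj z
      have hw : π w ∈ Submodule.map π (Submodule.span k S) :=
        ⟨w, by rw [hB']; trivial, rfl⟩
      rwa [hmapbot, Submodule.mem_bot] at hw
    haveI hss : Subsingleton (k ⊗[R] M) := ⟨fun x y => by rw [hzero x, hzero y]⟩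
    haveI := hp
    letI : Field (R ⧸ p) := Ideal.Quotient.field p
    have e : k ≃ₐ[R ⧸ p] (R ⧸ p) := FractionRing.algEquiv (R ⧸ p) (R ⧸ p)
    have eT : k ⊗[R] M ≃ₗ[R] (R ⧸ p) ⊗[R] M :=
      TensorProduct.congr (e.toLinearEquiv.restrictScalars R) (LinearEquiv.refl R M)
    haveI : Subsingleton ((R ⧸ p) ⊗[R] M) := eT.symm.toEquiv.subsingleton
    haveI : Subsingleton (M ⧸ (p • ⊤ : Submodule R M)) :=
      (TensorProduct.quotTensorEquivQuotSMul M p).symm.toEquiv.subsingleton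
    have htop : (p • ⊤ : Submodule R M) = ⊤ :=
      Submodule.Quotient.subsingleton_iff.1 ‹_›
    obtain ⟨r, hr1, hr0⟩ :=
      Submodule.exists_sub_one_mem_and_smul_eq_zero_of_fg_of_le_smul p
        (⊤ : Submodule R M) Module.Finite.fg_top (by rw [htop])
    have hrann : r ∈ Module.annihilator R M :=
      Module.mem_annihilator.2 fun m => hr0 m trivial
    have hone : (1 : R) ∈ p := by
      have hsub1 := p.sub_mem (hle hrann) hr1
      simpa using hsub1
    exact hp.ne_top ((Ideal.eq_top_iff_one p).2 hone)
end

section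
/- Let R be a commutative Noetherian ring with 1, let A be a finite R-algebra (finitely generated as an R-module, with R-bilinear multiplication), and let a_1, ..., a_n ∈ A. If for some prime p of R the images a_1(p), ..., a_n(p) generate A(p) := A ⊗_R R(p) as a non-unital R(p)-algebra, then there is an open neighborhood U of p in Spec R such that for every q ∈ U, the images a_1(q), ..., a_n(q) generate A(q) as a non-unital R(q)-algebra. -/
open TensorProduct

set_option synthInstance.maxHeartbeats 1000000 in
set_option maxHeartbeats 1000000 in
/-- If every element of `M` is killed by some element outside `q`, then `κ(q) ⊗ M = 0`. -/
lemma subsingleton_tensor_of_forall {R : Type} [CommRing R] (q : Ideal R) [q.IsPrime]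
    {M : Type} [AddCommGroup M] [Module R M]
    (h : ∀ m : M, ∃ r ∉ q, r • m = 0) :
    Subsingleton ((FractionRing (R ⧸ q)) ⊗[R] M) := by
  set K := FractionRing (R ⧸ q)
  refine subsingleton_of_forall_eq 0 (fun x => ?_)
  induction x using TensorProduct.induction_on with
  | zero => rfl
  | add x y hx hy => rw [hx, hy, add_zero]
  | tmul k m =>
    obtain ⟨r, hrq, hrm⟩ := h m
    have hne0 : algebraMap R K r ≠ 0 := by
      rw [IsScalarTower.algebraMap_apply R (R ⧸ q) K]
      intro h0
      exact hrq ((Ideal.Quotient.eq_zero_iff_mem).mp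
        ((IsFractionRing.to_map_eq_zero_iff (K := K)).mp h0))
    have hu : IsUnit (algebraMap R K r) := isUnit_iff_ne_zero.mpr hne0
    have h1 : algebraMap R K r • (k ⊗ₜ[R] m) = 0 := by
      rw [algebraMap_smul, ← tmul_smul, hrm, tmul_zero]
    have h2 : hu.unit • (k ⊗ₜ[R] m) = 0 := by rw [Units.smul_def, hu.unit_spec, h1]
    rw [← inv_smul_smul hu.unit (k ⊗ₜ[R] m), h2, smul_zero]

set_option synthInstance.maxHeartbeats 1000000 in
set_option maxHeartbeats 1000000 in
/-- Conversely, if `M` is finite and `κ(q) ⊗ M = 0`, there is a single `r ∉ q` killing `M`. -/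
lemma exists_annihilator_of_subsingleton {R : Type} [CommRing R] (q : Ideal R) [q.IsPrime]
    {M : Type} [AddCommGroup M] [Module R M] [Module.Finite R M]
    (hsub : Subsingleton ((FractionRing (R ⧸ q)) ⊗[R] M)) :
    ∃ r ∉ q, ∀ m : M, r • m = 0 := by
  set R' := R ⧸ q
  set K := FractionRing R'
  set S := nonZeroDivisors R'
  -- transfer the vanishing across `K ⊗[R'] (R' ⊗[R] M) ≃ K ⊗[R] M`
  haveI hsub' : Subsingleton (K ⊗[R'] (R' ⊗[R] M)) :=
    (TensorProduct.AlgebraTensorModule.cancelBaseChange R R' K K M).toEquiv.subsingleton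
  haveI : IsLocalizedModule S (TensorProduct.mk R' K (R' ⊗[R] M) 1) :=
    (isLocalizedModule_iff_isBaseChange S _ _).mpr (TensorProduct.isBaseChange _ _ _)
  have key : ∀ x : R' ⊗[R] M, ∃ s : S, (s : R') • x = 0 := by
    intro x
    have : TensorProduct.mk R' K (R' ⊗[R] M) 1 x = 0 := Subsingleton.elim _ _
    obtain ⟨s, hs⟩ := (IsLocalizedModule.eq_zero_iff S (TensorProduct.mk R' K (R' ⊗[R] M) 1)).mp this
    exact ⟨s, hs⟩
  -- pick a common denominator using finitely many generators
  obtain ⟨nn, g, hg⟩ := Module.Finite.exists_fin (R := R) (M := M)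
  choose s hs using fun i : Fin nn => key ((1 : R') ⊗ₜ[R] g i)
  set t : S := ∏ i, s i with ht
  have htM : ∀ m : M, (t : R') • ((1 : R') ⊗ₜ[R] m) = 0 := by
    have hmem : ∀ m : M, m ∈ LinearMap.ker
        (((LinearMap.lsmul R' (R' ⊗[R] M) (t : R')).restrictScalars R) ∘ₗ
          (TensorProduct.mk R R' M 1)) := by
      intro m
      have : m ∈ (⊤ : Submodule R M) := trivial
      rw [← hg] at this
      refine Submodule.span_induction (fun x hx => ?_) ?_ (fun x y _ _ hx hy => ?_)
        (fun r x _ hx => ?_) this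
      · obtain ⟨i, rfl⟩ := hx
        have hti : (t : R') = (∏ j ∈ Finset.univ.erase i, (s j : R')) * (s i : R') := by
          rw [ht]
          push_cast
          rw [Finset.prod_erase_mul _ _ (Finset.mem_univ i)]
        simp only [LinearMap.mem_ker, LinearMap.comp_apply, LinearMap.restrictScalars_apply,
          LinearMap.lsmul_apply, TensorProduct.mk_apply]
        rw [hti, mul_smul, hs i, smul_zero]
      · simp
      · simp only [LinearMap.mem_ker, map_add] at *
        rw [hx, hy, add_zero]
      · simp only [LinearMap.mem_ker, map_smul] at *
        rw [hx, smul_zero]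
    intro m
    simpa using hmem m
  obtain ⟨r, hr⟩ := Ideal.Quotient.mk_surjective (t : R')
  have hrq : r ∉ q := by
    intro hrq
    have : (t : R') = 0 := by rw [← hr, Ideal.Quotient.eq_zero_iff_mem]; exact hrq
    exact nonZeroDivisors.coe_ne_zero t this
  -- r • M ⊆ q • M
  have hrange : ∀ m : M, r • m ∈ q • (⊤ : Submodule R M) := by
    intro m
    have h0 : (Ideal.Quotient.mk q r) ⊗ₜ[R] m = 0 := by
      have := htM m
      rw [TensorProduct.smul_tmul', smul_eq_mul, mul_one, ← hr] at this
      exact this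
    have := congrArg (TensorProduct.quotTensorEquivQuotSMul M q) h0
    rw [TensorProduct.quotTensorEquivQuotSMul_mk_tmul, map_zero] at this
    exact (Submodule.Quotient.mk_eq_zero _).mp this
  -- Cayley–Hamilton / determinant trick
  set f : Module.End R M := algebraMap R (Module.End R M) r with hf
  have hfr : LinearMap.range f ≤ q • (⊤ : Submodule R M) := by
    rintro x ⟨m, rfl⟩
    simpa [hf, Module.algebraMap_end_apply] using hrange m
  obtain ⟨pl, hmonic, _, hcoeff, heval⟩ :=
    LinearMap.exists_monic_and_coeff_mem_pow_and_aeval_eq_zero_of_range_le_smul R f q hfr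
  refine ⟨pl.eval r, ?_, ?_⟩
  · intro hev
    have hpow : r ^ pl.natDegree ∈ q := by
      have hsum : pl.eval r = ∑ i ∈ Finset.range (pl.natDegree + 1), pl.coeff i * r ^ i := by
        rw [Polynomial.eval_eq_sum_range]
      have hrest : ∑ i ∈ Finset.range pl.natDegree, pl.coeff i * r ^ i ∈ q := by
        refine Ideal.sum_mem _ (fun i hi => Ideal.mul_mem_right _ _ ?_)
        have := hcoeff i
        refine Ideal.pow_le_self ?_ this
        simp only [Finset.mem_range] at hi
        omega
      have : r ^ pl.natDegree =
          pl.eval r - ∑ i ∈ Finset.range pl.natDegree, pl.coeff i * r ^ i := by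
        rw [hsum, Finset.sum_range_succ, hmonic.coeff_natDegree, one_mul]
        ring
      rw [this]
      exact Ideal.sub_mem _ hev hrest
    exact hrq (‹q.IsPrime›.mem_of_pow_mem _ hpow)
  · intro m
    have : Polynomial.aeval f pl = algebraMap R (Module.End R M) (pl.eval r) := by
      rw [hf, Polynomial.aeval_algebraMap_apply_eq_algebraMap_eval]
    have h0 : algebraMap R (Module.End R M) (pl.eval r) = 0 := by rw [← this, heval]
    have := congrArg (fun (φ : Module.End R M) => φ m) h0
    simpa [Module.algebraMap_end_apply] using this

set_option synthInstance.maxHeartbeats 1000000 in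
set_option maxHeartbeats 1000000 in
lemma gen_iff_subsingleton {R : Type} [CommRing R]
    {A : Type} [NonUnitalNonAssocRing A] [Module R A]
    [SMulCommClass R A A] [IsScalarTower R A A]
    {n : ℕ} (a : Fin n → A) (q : Ideal R) [q.IsPrime] :
    GeneratesAsNonUnitalAlgebra (FractionRing (R ⧸ q))
      (Set.range fun i => ((1 : FractionRing (R ⧸ q)) ⊗ₜ[R] a i)) ↔
    Subsingleton ((FractionRing (R ⧸ q)) ⊗[R]
      (A ⧸ (NonUnitalAlgebra.adjoin R (Set.range a)).toSubmodule)) := by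
  set K := FractionRing (R ⧸ q)
  set N := (NonUnitalAlgebra.adjoin R (Set.range a)).toSubmodule with hN
  set C0 : Submodule K (K ⊗[R] A) :=
    Submodule.span K ((fun b => (1 : K) ⊗ₜ[R] b) '' (N : Set A)) with hC0
  have hspan_iff : C0 = ⊤ ↔ Subsingleton (K ⊗[R] (A ⧸ N)) := by
    constructor
    · intro htop
      have hker : ∀ x : K ⊗[R] A, LinearMap.lTensor K N.mkQ x = 0 := by
        intro x
        have hx : x ∈ C0 := htop ▸ Submodule.mem_top
        refine Submodule.span_induction ?_ ?_ ?_ ?_ hx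
        · rintro _ ⟨b, hb, rfl⟩
          rw [LinearMap.lTensor_tmul]
          have : N.mkQ b = 0 := by
            rw [Submodule.mkQ_apply, Submodule.Quotient.mk_eq_zero]; exact hb
          rw [this, tmul_zero]
        · exact map_zero _
        · intro x y _ _ hx hy; rw [map_add, hx, hy, add_zero]
        · intro k x _ hx
          have : LinearMap.lTensor K N.mkQ (k • x) = k • LinearMap.lTensor K N.mkQ x := by
            rw [← LinearMap.baseChange_eq_ltensor, map_smul]
          rw [this, hx, smul_zero]
      refine subsingleton_of_forall_eq 0 (fun y => ?_)
      obtain ⟨x, rfl⟩ := LinearMap.lTensor_surjective K (Submodule.mkQ_surjective N) y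
      exact hker x
    · intro hsub
      rw [Submodule.eq_top_iff']
      intro x
      have h0 : LinearMap.lTensor K N.mkQ x = 0 := Subsingleton.elim _ _
      have hx : x ∈ LinearMap.range (LinearMap.lTensor K N.subtype) := by
        rw [← lTensor_mkQ (Q := K) N]; exact h0
      obtain ⟨y, rfl⟩ := hx
      clear h0
      induction y using TensorProduct.induction_on with
      | zero => rw [map_zero]; exact zero_mem _
      | tmul k b =>
        rw [LinearMap.lTensor_tmul]
        have : k ⊗ₜ[R] (N.subtype b) = k • ((1 : K) ⊗ₜ[R] (b : A)) := by
          rw [TensorProduct.smul_tmul', smul_eq_mul, mul_one]; rfl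
        rw [this]
        exact Submodule.smul_mem _ _ (Submodule.subset_span ⟨(b : A), b.2, rfl⟩)
      | add x y hx hy => rw [map_add]; exact add_mem hx hy
  rw [← hspan_iff]
  constructor
  · intro hgen
    refine hgen C0 ?_ ?_
    · rintro _ ⟨i, rfl⟩
      exact Submodule.subset_span ⟨a i, NonUnitalAlgebra.subset_adjoin R ⟨i, rfl⟩, rfl⟩
    · intro x hx y hy
      refine Submodule.span_induction₂ (p := fun x y _ _ => x * y ∈ C0) ?_ ?_ ?_ ?_ ?_ ?_ ?_ hx hy
      · rintro _ _ ⟨b, hb, rfl⟩ ⟨b', hb', rfl⟩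
        have : ((1 : K) ⊗ₜ[R] b) * ((1 : K) ⊗ₜ[R] b') = (1 : K) ⊗ₜ[R] (b * b') := by
          rw [Algebra.TensorProduct.tmul_mul_tmul, one_mul]
        rw [this]
        refine Submodule.subset_span ⟨b * b', ?_, rfl⟩
        have hb1 : b ∈ NonUnitalAlgebra.adjoin R (Set.range a) := hb
        have hb2 : b' ∈ NonUnitalAlgebra.adjoin R (Set.range a) := hb'
        show b * b' ∈ NonUnitalAlgebra.adjoin R (Set.range a)
        exact mul_mem hb1 hb2
      · intro y _; rw [zero_mul]; exact zero_mem _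
      · intro x _; rw [mul_zero]; exact zero_mem _
      · intro x y z _ _ _ h1 h2; rw [add_mul]; exact add_mem h1 h2
      · intro x y z _ _ _ h1 h2; rw [mul_add]; exact add_mem h1 h2
      · intro k x y _ _ h1; rw [smul_mul_assoc]; exact Submodule.smul_mem _ _ h1
      · intro k x y _ _ h1; rw [mul_smul_comm]; exact Submodule.smul_mem _ _ h1
  · intro hspan
    intro C hsubC hmulC
    have key : ∀ x ∈ NonUnitalAlgebra.adjoin R (Set.range a), (1 : K) ⊗ₜ[R] x ∈ C := by
      intro x hx
      refine NonUnitalAlgebra.adjoin_induction ?_ ?_ ?_ ?_ ?_ hx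
      · rintro _ ⟨i, rfl⟩
        exact hsubC ⟨i, rfl⟩
      · intro x y _ _ h1 h2; rw [tmul_add]; exact add_mem h1 h2
      · rw [tmul_zero]; exact zero_mem _
      · intro x y _ _ h1 h2
        have : (1 : K) ⊗ₜ[R] (x * y) = ((1 : K) ⊗ₜ[R] x) * ((1 : K) ⊗ₜ[R] y) := by
          rw [Algebra.TensorProduct.tmul_mul_tmul, one_mul]
        rw [this]
        exact hmulC _ h1 _ h2
      · intro r x _ h1
        have : (1 : K) ⊗ₜ[R] (r • x) = algebraMap R K r • ((1 : K) ⊗ₜ[R] x) := by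
          rw [algebraMap_smul, tmul_smul]
        rw [this]
        exact Submodule.smul_mem _ _ h1
    have hle : C0 ≤ C := by
      rw [hC0, Submodule.span_le]
      rintro _ ⟨b, hb, rfl⟩
      exact key b hb
    exact le_antisymm le_top (hspan ▸ hle)

set_option synthInstance.maxHeartbeats 1000000 in
set_option maxHeartbeats 1000000 in
/-- Lemma 2.2: generation of A(p) by the images of a₁, ..., aₙ is an open condition on
p ∈ Spec R. -/
theorem generation_is_open (R : Type) [CommRing R] [IsNoetherianRing R]
    (A : Type) [NonUnitalNonAssocRing A] [Module R A]
    [SMulCommClass R A A] [IsScalarTower R A A] [Module.Finite R A]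
    (n : ℕ) (a : Fin n → A) (p : Ideal R) (hp : p.IsPrime)
    (h : GeneratesAsNonUnitalAlgebra (FractionRing (R ⧸ p))
      (Set.range fun i => ((1 : FractionRing (R ⧸ p)) ⊗ₜ[R] a i))) :
    ∃ U : Set (PrimeSpectrum R), IsOpen U ∧ (⟨p, hp⟩ : PrimeSpectrum R) ∈ U ∧
      ∀ q ∈ U, GeneratesAsNonUnitalAlgebra (FractionRing (R ⧸ q.asIdeal))
        (Set.range fun i => ((1 : FractionRing (R ⧸ q.asIdeal)) ⊗ₜ[R] a i)) := by
  haveI := hp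
  set M := A ⧸ (NonUnitalAlgebra.adjoin R (Set.range a)).toSubmodule with hM
  refine ⟨(Module.support R M)ᶜ, ?_, ?_, ?_⟩
  · rw [Module.support_eq_zeroLocus]
    exact (PrimeSpectrum.isClosed_zeroLocus _).isOpen_compl
  · rw [Set.mem_compl_iff, Module.notMem_support_iff']
    obtain ⟨r, hrq, hr⟩ :=
      exists_annihilator_of_subsingleton p ((gen_iff_subsingleton a p).mp h)
    exact fun m => ⟨r, hrq, hr m⟩
  · intro q hq
    rw [Set.mem_compl_iff, Module.notMem_support_iff'] at hq
    haveI := q.2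
    exact (gen_iff_subsingleton a q.asIdeal).mpr
      (subsingleton_tensor_of_forall q.asIdeal hq)
end

section
/- Let A and B be finite-dimensional (not necessarily unital, associative, or commutative) algebras over an infinite field F, and suppose A is a form of B, i.e., there exists a field extension K/F with A ⊗_F K ≅ B ⊗_F K as K-algebras. If B can be generated by n elements as an F-algebra, then A can be generated by n elements as an F-algebra. -/
open TensorProduct

section Words
variable {R : Type*} [CommSemiring R] {A : Type*} [NonUnitalNonAssocSemiring A]
  [Module R A] [SMulCommClass R A A] [IsScalarTower R A A] {n : ℕ}

def wordSpan (R : Type*) [CommSemiring R] {A : Type*} [NonUnitalNonAssocSemiring A]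
    [Module R A] {n : ℕ} (v : Fin n → A) : Submodule R A :=
  Submodule.span R (Set.range (FreeMagma.lift v : FreeMagma (Fin n) →ₙ* A))

lemma wordSpan_mul_mem (v : Fin n → A) {x y : A} (hx : x ∈ wordSpan R v)
    (hy : y ∈ wordSpan R v) : x * y ∈ wordSpan R v := by
  induction hx using Submodule.span_induction with
  | mem x hxs =>
    induction hy using Submodule.span_induction with
    | mem y hys =>
      obtain ⟨w₁, rfl⟩ := hxs; obtain ⟨w₂, rfl⟩ := hys
      exact Submodule.subset_span ⟨w₁ * w₂, map_mul _ _ _⟩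
    | zero => rw [mul_zero]; exact zero_mem _
    | add a b _ _ iha ihb => rw [mul_add]; exact add_mem iha ihb
    | smul r a _ ih => rw [mul_smul_comm]; exact Submodule.smul_mem _ _ ih
  | zero => rw [zero_mul]; exact zero_mem _
  | add a b _ _ iha ihb => rw [add_mul]; exact add_mem iha ihb
  | smul r a _ ih => rw [smul_mul_assoc]; exact Submodule.smul_mem _ _ ih

lemma lift_mem_of_closed (v : Fin n → A) (M : Submodule R A)
    (hs : Set.range v ⊆ M) (hm : ∀ x ∈ M, ∀ y ∈ M, x * y ∈ M) (w : FreeMagma (Fin n)) :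
    FreeMagma.lift v w ∈ M := by
  induction w with
  | ih1 j => simpa using hs ⟨j, rfl⟩
  | ih2 w₁ w₂ ih₁ ih₂ => exact (map_mul (FreeMagma.lift v) w₁ w₂) ▸ hm _ ih₁ _ ih₂

lemma generates_iff_wordSpan (v : Fin n → A) :
    GeneratesAsNonUnitalAlgebra R (Set.range v) ↔ wordSpan R v = ⊤ := by
  constructor
  · intro h
    refine h _ ?_ fun x hx y hy => wordSpan_mul_mem v hx hy
    rintro _ ⟨j, rfl⟩
    exact Submodule.subset_span ⟨.of j, FreeMagma.lift_of _ _⟩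
  · intro h M hsub hmul
    rw [eq_top_iff, ← h, wordSpan, Submodule.span_le]
    rintro _ ⟨w, rfl⟩
    exact lift_mem_of_closed v M hsub hmul w

lemma lift_comp_mulHom {A' : Type*} [NonUnitalNonAssocSemiring A'] (f : A →ₙ* A')
    (v : Fin n → A) (w : FreeMagma (Fin n)) :
    FreeMagma.lift (fun j => f (v j)) w = f (FreeMagma.lift v w) := by
  induction w with
  | ih1 j => simp
  | ih2 w₁ w₂ ih₁ ih₂ => simp only [map_mul, ih₁, ih₂]
end Words

section Poly
variable {R S : Type*} [CommSemiring R] [CommSemiring S] {n d : ℕ}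

noncomputable def wordPoly (c : Fin d → Fin d → Fin d → R) :
    FreeMagma (Fin n) → Fin d → MvPolynomial (Fin n × Fin d) R
  | .of j, i => MvPolynomial.X (j, i)
  | .mul w₁ w₂, i => ∑ k : Fin d, ∑ l : Fin d,
      MvPolynomial.C (c k l i) * wordPoly c w₁ k * wordPoly c w₂ l

lemma wordPoly_mul (c : Fin d → Fin d → Fin d → R) (w₁ w₂ : FreeMagma (Fin n)) (i : Fin d) :
    wordPoly c (w₁ * w₂) i = ∑ k : Fin d, ∑ l : Fin d,
      MvPolynomial.C (c k l i) * wordPoly c w₁ k * wordPoly c w₂ l := rfl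

lemma map_wordPoly (f : R →+* S) (c : Fin d → Fin d → Fin d → R)
    (w : FreeMagma (Fin n)) (i : Fin d) :
    MvPolynomial.map f (wordPoly c w i) = wordPoly (fun k l i => f (c k l i)) w i := by
  induction w generalizing i with
  | ih1 j => simp [wordPoly]
  | ih2 w₁ w₂ ih₁ ih₂ => simp [wordPoly_mul, map_sum, ih₁, ih₂]

variable {A : Type*} [NonUnitalNonAssocSemiring A]
  [Module R A] [SMulCommClass R A A] [IsScalarTower R A A]

lemma repr_mul (b : Module.Basis (Fin d) R A) (x y : A) (i : Fin d) :
    b.repr (x * y) i = ∑ k : Fin d, ∑ l : Fin d,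
      b.repr x k * b.repr y l * b.repr (b k * b l) i := by
  have hxy : x * y = ∑ k : Fin d, ∑ l : Fin d,
      (b.repr x k * b.repr y l) • (b k * b l) := by
    conv_lhs => rw [← b.sum_repr x, ← b.sum_repr y]
    rw [Finset.sum_mul]
    refine Finset.sum_congr rfl fun k _ => ?_
    rw [Finset.mul_sum]
    refine Finset.sum_congr rfl fun l _ => ?_
    rw [smul_mul_assoc, mul_smul_comm, smul_smul]
  rw [hxy, map_sum, Finsupp.finset_sum_apply]
  refine Finset.sum_congr rfl fun k _ => ?_
  rw [map_sum, Finsupp.finset_sum_apply]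
  refine Finset.sum_congr rfl fun l _ => ?_
  rw [map_smul, Finsupp.smul_apply, smul_eq_mul]

lemma eval_wordPoly (b : Module.Basis (Fin d) R A) (v : Fin n → A)
    (w : FreeMagma (Fin n)) (i : Fin d) :
    MvPolynomial.eval (fun p => b.repr (v p.1) p.2)
      (wordPoly (fun k l i => b.repr (b k * b l) i) w i)
      = b.repr (FreeMagma.lift v w) i := by
  induction w generalizing i with
  | ih1 j => simp [wordPoly]
  | ih2 w₁ w₂ ih₁ ih₂ =>
    rw [map_mul (FreeMagma.lift v) w₁ w₂, repr_mul]
    simp only [wordPoly_mul, map_sum, MvPolynomial.eval_mul, MvPolynomial.eval_C, ih₁, ih₂]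
    refine Finset.sum_congr rfl fun k _ => Finset.sum_congr rfl fun l _ => ?_
    ring
end Poly



/-- Proposition 4.1: over an infinite field, if A is a form of B (they become isomorphic as
non-unital algebras after extension to some field K) and B is generated by n elements, then
A is generated by n elements. -/
theorem form_generators (F : Type) [Field F] [Infinite F]
    (A B : Type) [NonUnitalNonAssocRing A] [Module F A]
    [SMulCommClass F A A] [IsScalarTower F A A] [FiniteDimensional F A]
    [NonUnitalNonAssocRing B] [Module F B]
    [SMulCommClass F B B] [IsScalarTower F B B] [FiniteDimensional F B]
    (K : Type) [Field K] [Algebra F K]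
    (e : (K ⊗[F] A) ≃ₗ[K] (K ⊗[F] B)) (he : ∀ x y, e (x * y) = e x * e y)
    (n : ℕ) (hB : ∃ s : Finset B, s.card ≤ n ∧ GeneratesAsNonUnitalAlgebra F (s : Set B)) :
    ∃ s : Finset A, s.card ≤ n ∧ GeneratesAsNonUnitalAlgebra F (s : Set A) := by
  classical
  obtain ⟨s, hcard, hgen⟩ := hB
  obtain ⟨vB, hvB⟩ : ∃ vB : Fin n → B, (s : Set B) ⊆ Set.range vB := by
    refine ⟨fun j => if h : (j : ℕ) < s.card then (s.equivFin.symm ⟨j, h⟩ : B) else 0, ?_⟩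
    intro b hb
    refine ⟨⟨s.equivFin ⟨b, hb⟩, lt_of_lt_of_le (s.equivFin ⟨b, hb⟩).2 hcard⟩, ?_⟩
    simp
  have hgenB : wordSpan F vB = ⊤ := by
    rw [← generates_iff_wordSpan]
    intro M hsub hmul
    exact hgen M (fun b hb => hsub (hvB hb)) hmul
  -- move to K ⊗ B
  set vKB : Fin n → K ⊗[F] B := fun j => (1 : K) ⊗ₜ[F] vB j with hvKB
  have h1 : ∀ w, FreeMagma.lift vKB w = (1:K) ⊗ₜ[F] FreeMagma.lift vB w := by
    intro w
    induction w with
    | ih1 j => simp [hvKB]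
    | ih2 w₁ w₂ ih₁ ih₂ =>
      rw [map_mul, map_mul, ih₁, ih₂, Algebra.TensorProduct.tmul_mul_tmul, one_mul]
  have hone : ∀ b : B, (1:K) ⊗ₜ[F] b ∈ wordSpan K vKB := by
    intro b
    have hle : wordSpan F vB ≤
        ((wordSpan K vKB).restrictScalars F).comap (TensorProduct.mk F K B 1) := by
      rw [wordSpan, Submodule.span_le]
      rintro _ ⟨w, rfl⟩
      have : (1:K) ⊗ₜ[F] FreeMagma.lift vB w ∈ wordSpan K vKB := by
        rw [← h1]; exact Submodule.subset_span ⟨w, rfl⟩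
      simpa using this
    have hb : b ∈ wordSpan F vB := hgenB ▸ Submodule.mem_top
    simpa using hle hb
  have htopKB : wordSpan K vKB = ⊤ := by
    rw [eq_top_iff]
    have hF : (⊤ : Submodule F (K ⊗[F] B)) ≤ (wordSpan K vKB).restrictScalars F := by
      rw [← TensorProduct.span_tmul_eq_top F K B, Submodule.span_le]
      rintro _ ⟨k, b, rfl⟩
      have := (wordSpan K vKB).smul_mem k (hone b)
      rwa [TensorProduct.smul_tmul', smul_eq_mul, mul_one] at this
    intro x _
    exact hF Submodule.mem_top
  -- transfer along e.symm
  have hesymm : ∀ x y : K ⊗[F] B, e.symm (x * y) = e.symm x * e.symm y := by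
    intro x y
    apply e.injective
    rw [he, e.apply_symm_apply, e.apply_symm_apply, e.apply_symm_apply]
  set vK : Fin n → K ⊗[F] A := fun j => e.symm (vKB j) with hvK
  have h2 : ∀ w, FreeMagma.lift vK w = e.symm (FreeMagma.lift vKB w) := by
    intro w
    induction w with
    | ih1 j => simp [hvK]
    | ih2 w₁ w₂ ih₁ ih₂ => rw [map_mul, map_mul, ih₁, ih₂, hesymm]
  have htopKA : wordSpan K vK = ⊤ := by
    have hr : Set.range (FreeMagma.lift vK : FreeMagma (Fin n) →ₙ* K ⊗[F] A)
        = e.symm '' Set.range (FreeMagma.lift vKB : FreeMagma (Fin n) →ₙ* K ⊗[F] B) := by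
      have hco : ⇑(FreeMagma.lift vK : FreeMagma (Fin n) →ₙ* K ⊗[F] A)
          = ⇑e.symm ∘ ⇑(FreeMagma.lift vKB : FreeMagma (Fin n) →ₙ* K ⊗[F] B) := funext h2
      rw [hco, Set.range_comp]
    rw [wordSpan, hr, Submodule.span_image_linearEquiv, ← wordSpan, htopKB, Submodule.map_top]
    exact LinearMap.range_eq_top.mpr e.symm.surjective
  -- bases and structure constants
  set d := Module.finrank F A with hd
  let bA : Module.Basis (Fin d) F A := Module.finBasis F A
  let bK : Module.Basis (Fin d) K (K ⊗[F] A) := bA.baseChange K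
  have hcK : ∀ k l i : Fin d, bK.repr (bK k * bK l) i
      = algebraMap F K (bA.repr (bA k * bA l) i) := by
    intro k l i
    rw [show bK k = (1:K) ⊗ₜ[F] bA k from Module.Basis.baseChange_apply K bA k,
      show bK l = (1:K) ⊗ₜ[F] bA l from Module.Basis.baseChange_apply K bA l,
      Algebra.TensorProduct.tmul_mul_tmul, one_mul, Module.Basis.baseChange_repr_tmul,
      Algebra.algebraMap_eq_smul_one]
  -- extract a basis from the spanning words over K
  obtain ⟨tset, htsub, htspan, htind⟩ := exists_linearIndependent K
    (Set.range (FreeMagma.lift vK : FreeMagma (Fin n) →ₙ* K ⊗[F] A))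
  have htspan' : Submodule.span K tset = ⊤ := by rw [htspan]; exact htopKA
  let B0 : Module.Basis tset K (K ⊗[F] A) := Module.Basis.mk htind (by
    rw [Subtype.range_coe, htspan'])
  let eIdx : Fin d ≃ tset := bK.indexEquiv B0
  let wK : Fin d → FreeMagma (Fin n) := fun i => (htsub (eIdx i).2).choose
  have hwK : ∀ i, FreeMagma.lift vK (wK i) = ((eIdx i : tset) : K ⊗[F] A) :=
    fun i => (htsub (eIdx i).2).choose_spec
  have hdet : bK.det (fun i => FreeMagma.lift vK (wK i)) ≠ 0 := by
    have hfun : (fun i => FreeMagma.lift vK (wK i)) = ⇑(B0.reindex eIdx.symm) := by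
      funext i
      rw [hwK, Module.Basis.reindex_apply, Equiv.symm_symm]
      simp [B0, Module.Basis.mk_apply]
    rw [hfun]
    exact (bK.isUnit_det _).ne_zero
  -- the polynomial determinant
  let c : Fin d → Fin d → Fin d → F := fun k l i => bA.repr (bA k * bA l) i
  let Pm : Matrix (Fin d) (Fin d) (MvPolynomial (Fin n × Fin d) F) :=
    fun i j => wordPoly c (wK j) i
  have hcmap : (fun k l i => algebraMap F K (c k l i))
      = fun k l i => bK.repr (bK k * bK l) i := by
    funext k l i; exact (hcK k l i).symm
  have hdet0 : MvPolynomial.eval (fun p => bK.repr (vK p.1) p.2)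
      ((MvPolynomial.map (algebraMap F K)) Pm.det)
      = bK.det (fun i => FreeMagma.lift vK (wK i)) := by
    have hM : (Pm.map (MvPolynomial.map (algebraMap F K))).map
        (MvPolynomial.eval fun p => bK.repr (vK p.1) p.2)
        = bK.toMatrix (fun i => FreeMagma.lift vK (wK i)) := by
      ext i j
      rw [Matrix.map_apply, Matrix.map_apply,
        show Pm i j = wordPoly c (wK j) i from rfl, map_wordPoly, hcmap,
        eval_wordPoly bK vK, Module.Basis.toMatrix_apply]
    rw [RingHom.map_det, RingHom.map_det]
    simp only [RingHom.mapMatrix_apply]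
    rw [hM, Module.Basis.det_apply]
  have hDne : Pm.det ≠ 0 := by
    intro h0
    apply hdet
    rw [← hdet0, h0, map_zero, map_zero]
  obtain ⟨x, hx⟩ : ∃ x : Fin n × Fin d → F, MvPolynomial.eval x Pm.det ≠ 0 := by
    by_contra hall
    push_neg at hall
    exact hDne (MvPolynomial.funext fun x => by rw [hall x, map_zero])
  -- the generating tuple for A
  let vA : Fin n → A := fun j => ∑ i : Fin d, x (j, i) • bA i
  have hrepr : ∀ j i, bA.repr (vA j) i = x (j, i) := by
    intro j i
    simp [vA, map_sum, map_smul, Finsupp.finset_sum_apply, Module.Basis.repr_self,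
      Finsupp.single_apply]
  have hdetA : bA.det (fun i => FreeMagma.lift vA (wK i)) ≠ 0 := by
    have heq : MvPolynomial.eval x Pm.det
        = bA.det (fun i => FreeMagma.lift vA (wK i)) := by
      have hM : Pm.map (MvPolynomial.eval x)
          = bA.toMatrix (fun i => FreeMagma.lift vA (wK i)) := by
        ext i j
        rw [Matrix.map_apply, show Pm i j = wordPoly c (wK j) i from rfl]
        have hxf : x = fun p : Fin n × Fin d => bA.repr (vA p.1) p.2 := by
          funext p; rw [hrepr]
        rw [hxf, eval_wordPoly bA vA, Module.Basis.toMatrix_apply]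
      rw [RingHom.map_det]
      simp only [RingHom.mapMatrix_apply]
      rw [hM, Module.Basis.det_apply]
    rwa [heq] at hx
  have hspanA : Submodule.span F (Set.range fun i => FreeMagma.lift vA (wK i)) = ⊤ :=
    ((Module.Basis.is_basis_iff_det bA).mpr (isUnit_iff_ne_zero.mpr hdetA)).2
  have htopA : wordSpan F vA = ⊤ := by
    rw [eq_top_iff, ← hspanA]
    refine Submodule.span_le.mpr ?_
    rintro _ ⟨i, rfl⟩
    exact Submodule.subset_span ⟨wK i, rfl⟩
  refine ⟨Finset.univ.image vA, le_trans Finset.card_image_le (by simp), ?_⟩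
  have hgenA := (generates_iff_wordSpan (R := F) vA).mpr htopA
  rwa [show ((Finset.univ.image vA : Finset A) : Set A) = Set.range vA by
    rw [Finset.coe_image, Finset.coe_univ, Set.image_univ]]
end

section
/- Let F be any field and n ≥ 1. The matrix algebra Mat_n(F) is generated as a non-unital F-algebra by the two matrices E_{1,1} (the matrix unit with 1 in position (1,1) and 0 elsewhere) and C := E_{1,2} + E_{2,3} + ... + E_{n-1,n} + E_{n,1} (the cyclic permutation matrix). -/
open TensorProduct
open Fin.NatCast

lemma row_mul_cyc (F : Type) [Field F] (n : ℕ) [NeZero n] (a : Fin n) :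
    Matrix.single (0 : Fin n) a (1 : F) *
      (∑ i : Fin n, Matrix.single i (i + 1) (1 : F)) =
    Matrix.single (0 : Fin n) (a + 1) (1 : F) := by
  rw [Finset.mul_sum, Finset.sum_eq_single a]
  · rw [Matrix.single_mul_single_same, one_mul]
  · intro b _ hb
    exact Matrix.single_mul_single_of_ne 1 (0 : Fin n) a b (Ne.symm hb) 1
  · simp

lemma cyc_mul_col (F : Type) [Field F] (n : ℕ) [NeZero n] (a : Fin n) :
    (∑ i : Fin n, Matrix.single i (i + 1) (1 : F)) *
      Matrix.single a (0 : Fin n) (1 : F) =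
    Matrix.single (a - 1) (0 : Fin n) (1 : F) := by
  rw [Finset.sum_mul, Finset.sum_eq_single (a - 1)]
  · rw [sub_add_cancel, Matrix.single_mul_single_same, one_mul]
  · intro b _ hb
    exact Matrix.single_mul_single_of_ne 1 b (b + 1) a
      (fun h => hb (eq_sub_of_add_eq h)) 1
  · simp

/-- The matrix algebra Matₙ(F) is generated as a non-unital F-algebra by E₁₁ and the cyclic
permutation matrix E₁₂ + E₂₃ + ... + Eₙ₁. -/
theorem matrix_two_generators (F : Type) [Field F] (n : ℕ) [NeZero n] :
    GeneratesAsNonUnitalAlgebra F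
      ({Matrix.single (0 : Fin n) (0 : Fin n) (1 : F),
        ∑ i : Fin n, Matrix.single i (i + 1) (1 : F)} :
        Set (Matrix (Fin n) (Fin n) F)) := by
  intro B hs hmul
  have hE : Matrix.single (0 : Fin n) (0 : Fin n) (1 : F) ∈ B := hs (Set.mem_insert _ _)
  have hC : (∑ i : Fin n, Matrix.single i (i + 1) (1 : F)) ∈ B :=
    hs (Set.mem_insert_of_mem _ rfl)
  have hrow : ∀ k : ℕ, Matrix.single (0 : Fin n) ((k : Fin n)) (1 : F) ∈ B := by
    intro k
    induction k with
    | zero => simpa using hE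
    | succ k ih =>
        have := hmul _ ih _ hC
        rw [row_mul_cyc] at this
        simpa [Nat.cast_add] using this
  have hcol : ∀ k : ℕ, Matrix.single (-(k : Fin n)) (0 : Fin n) (1 : F) ∈ B := by
    intro k
    induction k with
    | zero => simpa using hE
    | succ k ih =>
        have := hmul _ hC _ ih
        rw [cyc_mul_col] at this
        have he : -((k : Fin n)) - 1 = -(((k + 1 : ℕ) : Fin n)) := by push_cast; abel
        rwa [he] at this
  have hij : ∀ i j : Fin n, Matrix.single i j (1 : F) ∈ B := by
    intro i j
    have h1 : Matrix.single i (0 : Fin n) (1 : F) ∈ B := by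
      have := hcol ((-i).val)
      rwa [Fin.cast_val_eq_self, neg_neg] at this
    have h2 : Matrix.single (0 : Fin n) j (1 : F) ∈ B := by
      have := hrow j.val
      rwa [Fin.cast_val_eq_self] at this
    have := hmul _ h1 _ h2
    rwa [Matrix.single_mul_single_same, one_mul] at this
  rw [eq_top_iff]
  intro M _
  rw [Matrix.matrix_eq_sum_single M]
  refine Submodule.sum_mem _ (fun i _ => Submodule.sum_mem _ (fun j _ => ?_))
  have : Matrix.single i j (M i j) = (M i j) • Matrix.single i j (1 : F) := by
    simp
  rw [this]
  exact Submodule.smul_mem _ _ (hij i j)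
end

section
/- Let F be a finite field with q elements and let A = F × ... × F (n copies, componentwise operations). Then every element x of A satisfies x^q = x, and consequently any generating set of A as a non-unital F-algebra (or even as a unital F-algebra) must contain at least ⌈log_q(n+1)⌉ elements (respectively ⌈log_q n⌉ if the unit may be used). -/
open TensorProduct

/-- Over the field F with q elements, every x ∈ Fⁿ satisfies x^q = x, and a generating set of
Fⁿ as a non-unital F-algebra has at least ⌈log_q (n+1)⌉ elements (resp. ⌈log_q n⌉ if use of
the unit is allowed, i.e., for generation as a unital algebra). -/
theorem finite_field_lower_bound (F : Type) [Field F] [Fintype F] (q : ℕ)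
    (hq : Fintype.card F = q) (n : ℕ) :
    (∀ x : Fin n → F, x ^ q = x) ∧
    (∀ s : Finset (Fin n → F), GeneratesAsNonUnitalAlgebra F (s : Set (Fin n → F)) →
      Nat.clog q (n + 1) ≤ s.card) ∧
    (∀ s : Finset (Fin n → F), Algebra.adjoin F (s : Set (Fin n → F)) = ⊤ →
      Nat.clog q n ≤ s.card) := by
  classical
  have hq2 : 1 < q := hq ▸ Fintype.one_lt_card
  refine ⟨fun x => funext fun i => by
      simpa using hq ▸ FiniteField.pow_card (x i), ?_, ?_⟩
  · intro s hs
    set B : Submodule F (Fin n → F) :=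
      { carrier := {x | (∀ i j, (∀ g ∈ s, g i = g j) → x i = x j) ∧
          (∀ i, (∀ g ∈ s, g i = 0) → x i = 0)}
        add_mem' := fun hx hy => ⟨fun i j h => by
            simp [hx.1 i j h, hy.1 i j h],
          fun i h => by simp [hx.2 i h, hy.2 i h]⟩
        zero_mem' := ⟨fun i j _ => rfl, fun i _ => rfl⟩
        smul_mem' := fun c x hx => ⟨fun i j h => by simp [hx.1 i j h],
          fun i h => by simp [hx.2 i h]⟩ } with hBdef
    have hB : B = ⊤ := hs B (fun g hg => ⟨fun i j h => h g hg, fun i h => h g hg⟩)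
      (fun x hx y hy => ⟨fun i j h => by
          simp only [Pi.mul_apply, hx.1 i j h, hy.1 i j h],
        fun i h => by simp only [Pi.mul_apply, hx.2 i h, zero_mul]⟩)
    have key : ∀ x : Fin n → F, (∀ i j, (∀ g ∈ s, g i = g j) → x i = x j) ∧
        (∀ i, (∀ g ∈ s, g i = 0) → x i = 0) := by
      intro x
      have : x ∈ B := hB ▸ Submodule.mem_top
      exact this
    set φ : Option (Fin n) → (s → F) := fun o => match o with
      | none => 0
      | some i => fun g => (g : Fin n → F) i with hφ
    have hinj : Function.Injective φ := by
      intro a b hab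
      match a, b with
      | none, none => rfl
      | some i, none =>
        exfalso
        have := (key (Pi.single i 1)).2 i (fun g hg => congrFun hab ⟨g, hg⟩)
        simp at this
      | none, some i =>
        exfalso
        have := (key (Pi.single i 1)).2 i (fun g hg => (congrFun hab ⟨g, hg⟩).symm)
        simp at this
      | some i, some j =>
        by_cases hij : i = j
        · exact hij ▸ rfl
        · exfalso
          have := (key (Pi.single i 1)).1 i j (fun g hg => congrFun hab ⟨g, hg⟩)
          simp [Pi.single_apply, hij] at this
    have hcard := Fintype.card_le_of_injective φ hinj
    rw [Fintype.card_option, Fintype.card_fin, Fintype.card_fun, hq,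
      Fintype.card_coe] at hcard
    exact (Nat.clog_le_iff_le_pow hq2).mpr hcard
  · intro s hs
    set B : Subalgebra F (Fin n → F) :=
      { carrier := {x | ∀ i j, (∀ g ∈ s, g i = g j) → x i = x j}
        add_mem' := fun hx hy i j h => by simp [hx i j h, hy i j h]
        mul_mem' := fun hx hy i j h => by simp only [Pi.mul_apply, hx i j h, hy i j h]
        algebraMap_mem' := fun c i j _ => rfl } with hBdef
    have hB : B = ⊤ := top_le_iff.mp (hs ▸ Algebra.adjoin_le fun g hg i j h => h g hg)
    have key : ∀ x : Fin n → F, ∀ i j, (∀ g ∈ s, g i = g j) → x i = x j := by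
      intro x
      have : x ∈ B := hB ▸ Algebra.mem_top
      exact this
    set φ : Fin n → (s → F) := fun i g => (g : Fin n → F) i with hφ
    have hinj : Function.Injective φ := by
      intro i j hab
      by_cases hij : i = j
      · exact hij
      · exfalso
        have := key (Pi.single i 1) i j (fun g hg => congrFun hab ⟨g, hg⟩)
        simp [Pi.single_apply, hij] at this
    have hcard := Fintype.card_le_of_injective φ hinj
    rw [Fintype.card_fin, Fintype.card_fun, hq, Fintype.card_coe] at hcard
    exact (Nat.clog_le_iff_le_pow hq2).mpr hcard
end

section
/- Let F be a finite field with q elements and let A be an étale F-algebra of rank n (i.e., a finite product of finite separable field extensions of F with total dimension n). Then A can be generated as a non-unital F-algebra by ⌈log_q(n+1)⌉ elements. -/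
open TensorProduct

-- geometric sum bound
lemma geomAux (q : ℕ) (hq : 2 ≤ q) : ∀ d : ℕ, (∑ t ∈ Finset.Ico 1 d, q ^ t) ≤ q ^ d - q := by
  intro d
  induction d with
  | zero => simp
  | succ d ih =>
    rcases Nat.eq_zero_or_pos d with rfl | hd
    · simp
    · rw [Finset.sum_Ico_succ_top (by omega)]
      have h1 : q ≤ q ^ d := Nat.le_self_pow (by omega) q
      have h2 : 2 * q ^ d ≤ q ^ (d + 1) := by
        calc 2 * q ^ d ≤ q * q ^ d := Nat.mul_le_mul_right _ hq
          _ = q ^ (d+1) := by ring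
      omega

-- roots of x^N = x
lemma rootF_card_le (K : Type*) [Field K] [Fintype K] [DecidableEq K] (N : ℕ) (hN : 2 ≤ N) :
    (Finset.univ.filter (fun x : K => x ^ N = x)).card ≤ N := by
  classical
  set P : Polynomial K := Polynomial.X ^ N - Polynomial.X with hP
  have hdeg : P.natDegree = N := by
    rw [hP]
    rw [Polynomial.natDegree_sub_eq_left_of_natDegree_lt]
    · exact Polynomial.natDegree_X_pow N
    · rw [Polynomial.natDegree_X_pow, Polynomial.natDegree_X]; omega
  have hP0 : P ≠ 0 := fun h => by simp [h] at hdeg; omega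
  have hsub : (Finset.univ.filter (fun x : K => x ^ N = x)) ⊆ P.roots.toFinset := by
    intro x hx
    rw [Finset.mem_filter] at hx
    rw [Multiset.mem_toFinset, Polynomial.mem_roots hP0]
    simp [hP, Polynomial.IsRoot, sub_eq_zero, hx.2]
  calc (Finset.univ.filter (fun x : K => x ^ N = x)).card
      ≤ P.roots.toFinset.card := Finset.card_le_card hsub
    _ ≤ Multiset.card P.roots := Multiset.toFinset_card_le _
    _ ≤ P.natDegree := P.card_roots'
    _ = N := hdeg

lemma nongen_pow (F K : Type*) [Field F] [Fintype F] [Field K] [Fintype K] [Algebra F K]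
    {q d : ℕ} (hq : Fintype.card F = q) (hd : Module.finrank F K = d)
    (γ : K) (h : Algebra.adjoin F {γ} ≠ ⊤) :
    ∃ t ∈ Finset.Ico 1 d, γ ^ q ^ t = γ := by
  classical
  haveI : Module.Finite F K := Module.finite_iff_finite.mpr inferInstance
  set S : Subalgebra F K := Algebra.adjoin F {γ} with hS
  haveI : Fintype S := Fintype.ofFinite _
  haveI : Nontrivial S := ⟨1, 0, fun hc => one_ne_zero (congrArg Subtype.val hc)⟩
  letI : Field S := (Finite.isField_of_domain S).toField
  set t := Module.finrank F S with ht
  have ht1 : 1 ≤ t := Module.finrank_pos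
  have htd : t < d := by
    rw [← hd]
    have : Subalgebra.toSubmodule S < ⊤ := by
      rcases lt_or_eq_of_le (le_top (a := Subalgebra.toSubmodule S)) with h' | h'
      · exact h'
      · exact absurd (Algebra.toSubmodule_eq_top.mp h') h
    simpa using Submodule.finrank_lt (K := F) (V := K) this.ne
  have hcard : Fintype.card S = q ^ t := by
    rw [← hq, ht]; exact Module.card_eq_pow_finrank
  refine ⟨t, Finset.mem_Ico.mpr ⟨ht1, htd⟩, ?_⟩
  have : (⟨γ, Algebra.self_mem_adjoin_singleton F γ⟩ : S) ^ (q ^ t) =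
      ⟨γ, Algebra.self_mem_adjoin_singleton F γ⟩ := by
    rw [← hcard]; exact FiniteField.pow_card _
  have := congrArg Subtype.val this
  simpa using this

open Classical in
lemma nongen_card_le (F K : Type*) [Field F] [Fintype F] [Field K] [Fintype K] [Algebra F K]
    {q d : ℕ} (hq : Fintype.card F = q) (hd : Module.finrank F K = d) :
    (Finset.univ.filter (fun γ : K => Algebra.adjoin F {γ} ≠ ⊤)).card ≤ q ^ d - q := by
  classical
  have hq2 : 2 ≤ q := hq ▸ Fintype.one_lt_card
  have hsub : (Finset.univ.filter (fun γ : K => Algebra.adjoin F {γ} ≠ ⊤)) ⊆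
      (Finset.Ico 1 d).biUnion (fun t => Finset.univ.filter (fun x : K => x ^ q ^ t = x)) := by
    intro γ hγ
    rw [Finset.mem_filter] at hγ
    obtain ⟨t, ht, hpow⟩ := nongen_pow F K hq hd γ hγ.2
    exact Finset.mem_biUnion.mpr ⟨t, ht, Finset.mem_filter.mpr ⟨Finset.mem_univ _, hpow⟩⟩
  calc (Finset.univ.filter (fun γ : K => Algebra.adjoin F {γ} ≠ ⊤)).card
      ≤ ∑ t ∈ Finset.Ico 1 d, (Finset.univ.filter (fun x : K => x ^ q ^ t = x)).card :=
        (Finset.card_le_card hsub).trans (Finset.card_biUnion_le)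
    _ ≤ ∑ t ∈ Finset.Ico 1 d, q ^ t := by
        refine Finset.sum_le_sum fun t ht => ?_
        refine rootF_card_le K (q ^ t) ?_
        have := Nat.one_le_two_pow (n := t)
        calc 2 = 2 ^ 1 := rfl
          _ ≤ 2 ^ t := Nat.pow_le_pow_right (by omega) (Finset.mem_Ico.mp ht).1
          _ ≤ q ^ t := Nat.pow_le_pow_left hq2 t
    _ ≤ q ^ d - q := geomAux q hq2 d

lemma crt_surj {R : Type*} [CommRing R] {ι : Type*} [Finite ι] (I : ι → Ideal R)
    (hmax : ∀ i, (I i).IsMaximal) (hne : ∀ i j, i ≠ j → I i ≠ I j) (y : ∀ i, R ⧸ I i) :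
    ∃ x : R, ∀ i, Ideal.Quotient.mk (I i) x = y i := by
  have hco : Pairwise (Function.onFun IsCoprime I) := fun i j hij =>
    Ideal.isCoprime_iff_sup_eq.mpr ((hmax i).coprime_of_ne (hmax j) (hne i j hij))
  obtain ⟨z, hz⟩ := Ideal.quotientInfToPiQuotient_surj hco y
  obtain ⟨x, rfl⟩ := Ideal.Quotient.mk_surjective z
  exact ⟨x, fun i => by rw [← hz]; exact (Ideal.quotientInfToPiQuotient_mk' I x i).symm⟩

/-- Every étale algebra of rank n over the finite field F with q elements can be generated by
⌈log_q (n+1)⌉ elements as a non-unital F-algebra. -/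
theorem etale_generators_finite_field (F : Type) [Field F] [Fintype F] (q : ℕ)
    (hq : Fintype.card F = q)
    (A : Type) [CommRing A] [Algebra F A] [Algebra.Etale F A]
    (n : ℕ) (hn : Module.finrank F A = n) :
    ∃ s : Finset A, s.card ≤ Nat.clog q (n + 1) ∧
      GeneratesAsNonUnitalAlgebra F (s : Set A) := by
  classical
  haveI : Algebra.EssFiniteType F A :=
    haveI : Algebra.FiniteType F A := Algebra.FiniteType.of_finitePresentation
    inferInstance
  haveI : Module.Finite F A := Algebra.FormallyUnramified.finite_of_free F A
  haveI : IsReduced A := Algebra.FormallyUnramified.isReduced_of_field F A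
  haveI : Finite A := Module.finite_of_finite F
  have hq2 : 2 ≤ q := hq ▸ Fintype.one_lt_card
  by_cases hA : Subsingleton A
  · refine ⟨∅, by simp, fun B _ _ => ?_⟩
    ext x
    simp [Subsingleton.elim x 0]
  haveI : Nontrivial A := not_subsingleton_iff_nontrivial.mp hA
  have hn1 : 1 ≤ n := hn ▸ Module.finrank_pos
  set k := Nat.clog q (n + 1) with hkdef
  have hk : n + 1 ≤ q ^ k := Nat.le_pow_clog (by omega) _
  have hk1 : 1 ≤ k := Nat.clog_pos (by omega) (by omega)
  set k' := k - 1 with hk'def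
  have hkk : k = k' + 1 := by omega
  -- maximal ideal setup
  set ι' := {I : Ideal A | I.IsMaximal} with hι'
  haveI : Finite ι' := (IsArtinianRing.setOfPred_isMaximal_finite A).to_subtype
  haveI : Fintype ι' := Fintype.ofFinite _
  haveI instmax : ∀ m : ι', m.1.IsMaximal := fun m => m.2
  letI instFld : ∀ m : ι', Field (A ⧸ m.1) := fun m => Ideal.Quotient.field m.1
  haveI instFin : ∀ m : ι', Finite (A ⧸ m.1) := fun m => Quotient.finite _
  haveI instMF : ∀ m : ι', Module.Finite F (A ⧸ m.1) :=
    fun m => Module.finite_iff_finite.mpr (instFin m)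
  haveI instFT : ∀ m : ι', Fintype (A ⧸ m.1) := fun m => Fintype.ofFinite _
  set d : ι' → ℕ := fun m => Module.finrank F (A ⧸ m.1) with hddef
  have hd1 : ∀ m : ι', 1 ≤ d m := fun m => Module.finrank_pos
  -- injectivity of simultaneous reduction
  have Φinj : ∀ x : A, (∀ m : ι', Ideal.Quotient.mk m.1 x = 0) → x = 0 := by
    intro x hx
    have hmem : x ∈ nilradical A := by
      rw [nilradical_eq_sInf, Submodule.mem_sInf]
      intro I hI
      have hImax : Ideal.IsMaximal I := (IsArtinianRing.isPrime_iff_isMaximal I).mp hI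
      have := hx ⟨I, hImax⟩
      rwa [Ideal.Quotient.eq_zero_iff_mem] at this
    rw [nilradical_eq_zero] at hmem
    simpa using hmem
  -- surjectivity of simultaneous reduction
  have hsurjA : ∀ y : ∀ m : ι', A ⧸ m.1, ∃ x : A, ∀ m, Ideal.Quotient.mk m.1 x = y m :=
    crt_surj _ (fun m => m.2) (fun m m' hmm hEq => hmm (Subtype.ext hEq))
  -- sum of degrees bound
  have hsum : ∑ m : ι', d m ≤ n := by
    let Φl : A →ₗ[F] (∀ m : ι', A ⧸ m.1) :=
      LinearMap.pi (fun m => (Ideal.Quotient.mkₐ F m.1).toLinearMap)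
    have hsurj : Function.Surjective Φl := by
      intro y
      obtain ⟨x, hx⟩ := hsurjA y
      exact ⟨x, funext fun m => hx m⟩
    have h1 : Module.finrank F (∀ m : ι', A ⧸ m.1) = ∑ m : ι', d m :=
      Module.finrank_pi_fintype F
    have h2 : Module.finrank F (∀ m : ι', A ⧸ m.1) ≤ Module.finrank F A := by
      have := LinearMap.finrank_range_le Φl
      rwa [LinearMap.range_eq_top.mpr hsurj, finrank_top] at this
    omega
  -- the greedy selection
  set r := Fintype.card ι' with hrdef
  set e : Fin r ≃ ι' := (Fintype.equivFin ι').symm with hedef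
  have key : ∀ j : ℕ, j ≤ r → ∃ (γ : ∀ m : ι', A ⧸ m.1) (c : ι' → Fin k' → F),
      (∀ i : Fin r, (i : ℕ) < j → Algebra.adjoin F {γ (e i)} = ⊤) ∧
      (∀ i : Fin r, (i : ℕ) < j → ¬(γ (e i) = 0 ∧ c (e i) = 0)) ∧
      (∀ i i' : Fin r, (i : ℕ) < (i' : ℕ) → (i' : ℕ) < j →
        ∀ σ : (A ⧸ (e i).1) →ₐ[F] (A ⧸ (e i').1),
          ¬(σ (γ (e i)) = γ (e i') ∧ c (e i) = c (e i'))) := by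
    intro j
    induction j with
    | zero =>
      exact fun _ => ⟨fun m => 0, fun _ => 0,
        fun i h => absurd h (Nat.not_lt_zero _),
        fun i h => absurd h (Nat.not_lt_zero _),
        fun i i' h h' => absurd h' (Nat.not_lt_zero _)⟩
    | succ j ih =>
      intro hjr
      obtain ⟨γ, c, hgen, hnz, hpair⟩ := ih (by omega)
      have hjr' : j < r := by omega
      have hnem' : ∀ i : Fin r, (i : ℕ) < j → e i ≠ e ⟨j, hjr'⟩ := by
        intro i hi hEq
        have h2 : i = ⟨j, hjr'⟩ := e.injective hEq
        rw [h2] at hi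
        simp at hi
      have hex : ∃ gc : (A ⧸ (e ⟨j, hjr'⟩).1) × (Fin k' → F),
          Algebra.adjoin F {gc.1} = ⊤ ∧ ¬(gc.1 = 0 ∧ gc.2 = 0) ∧
          ∀ i : Fin r, (i : ℕ) < j →
            ∀ σ : (A ⧸ (e i).1) →ₐ[F] (A ⧸ (e ⟨j, hjr'⟩).1),
              ¬(σ (γ (e i)) = gc.1 ∧ c (e i) = gc.2) := by
        have hcardK : Fintype.card (A ⧸ (e ⟨j, hjr'⟩).1) = q ^ d (e ⟨j, hjr'⟩) := by
          rw [← hq]; exact Module.card_eq_pow_finrank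
        have hcardF : Fintype.card (Fin k' → F) = q ^ k' := by
          rw [Fintype.card_fun, hq, Fintype.card_fin]
        set Bad1 : Finset ((A ⧸ (e ⟨j, hjr'⟩).1) × (Fin k' → F)) :=
          (Finset.univ.filter (fun g : A ⧸ (e ⟨j, hjr'⟩).1 => Algebra.adjoin F {g} ≠ ⊤)) ×ˢ
            Finset.univ with hBad1
        set Bad2 : Finset ((A ⧸ (e ⟨j, hjr'⟩).1) × (Fin k' → F)) :=
          {((0 : A ⧸ (e ⟨j, hjr'⟩).1), (0 : Fin k' → F))} with hBad2
        set Bad3 : Finset ((A ⧸ (e ⟨j, hjr'⟩).1) × (Fin k' → F)) :=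
          Finset.univ.biUnion (fun i : Fin r =>
            if (i : ℕ) < j then
              ((minpoly F (γ (e i))).aroots (A ⧸ (e ⟨j, hjr'⟩).1)).toFinset ×ˢ {c (e i)}
            else ∅) with hBad3
        have hB1 : Bad1.card ≤ (q ^ d (e ⟨j, hjr'⟩) - q) * q ^ k' := by
          rw [hBad1, Finset.card_product, Finset.card_univ, hcardF]
          refine Nat.mul_le_mul_right _ ?_
          exact nongen_card_le F (A ⧸ (e ⟨j, hjr'⟩).1) hq rfl
        have hB3 : Bad3.card + d (e ⟨j, hjr'⟩) ≤ n := by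
          have h1 : Bad3.card ≤ ∑ i : Fin r, (if (i : ℕ) < j then d (e i) else 0) := by
            refine Finset.card_biUnion_le.trans (Finset.sum_le_sum fun i _ => ?_)
            by_cases hij : (i : ℕ) < j
            · rw [if_pos hij, if_pos hij]
              rw [Finset.card_product, Finset.card_singleton, mul_one]
              calc ((minpoly F (γ (e i))).aroots (A ⧸ (e ⟨j, hjr'⟩).1)).toFinset.card
                  ≤ Multiset.card ((minpoly F (γ (e i))).aroots (A ⧸ (e ⟨j, hjr'⟩).1)) :=
                    Multiset.toFinset_card_le _
                _ ≤ ((minpoly F (γ (e i))).map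
                      (algebraMap F (A ⧸ (e ⟨j, hjr'⟩).1))).natDegree :=
                    Polynomial.card_roots' _
                _ ≤ (minpoly F (γ (e i))).natDegree := Polynomial.natDegree_map_le
                _ ≤ d (e i) := minpoly.natDegree_le _
            · rw [if_neg hij, if_neg hij]
              simp
          have h2 : (∑ i : Fin r, if (i : ℕ) < j then d (e i) else 0) + d (e ⟨j, hjr'⟩) ≤
              ∑ i : Fin r, d (e i) := by
            rw [← Finset.sum_filter]
            have hsplit := Finset.sum_filter_add_sum_filter_not Finset.univ
              (fun i : Fin r => (i : ℕ) < j) (fun i => d (e i))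
            have hone : d (e ⟨j, hjr'⟩) ≤
                ∑ i ∈ Finset.univ.filter (fun i : Fin r => ¬ (i : ℕ) < j), d (e i) :=
              Finset.single_le_sum (f := fun i => d (e i)) (fun _ _ => Nat.zero_le _)
                (Finset.mem_filter.mpr ⟨Finset.mem_univ (⟨j, hjr'⟩ : Fin r),
                  fun h => Nat.lt_irrefl j h⟩)
            omega
          have h3 : ∑ i : Fin r, d (e i) = ∑ m : ι', d m := Equiv.sum_comp e d
          omega
        have htot : (Bad1 ∪ Bad2 ∪ Bad3).card <
            Fintype.card ((A ⧸ (e ⟨j, hjr'⟩).1) × (Fin k' → F)) := by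
          have hc : Fintype.card ((A ⧸ (e ⟨j, hjr'⟩).1) × (Fin k' → F)) =
              q ^ d (e ⟨j, hjr'⟩) * q ^ k' := by
            rw [Fintype.card_prod, hcardK, hcardF]
          have hqd : q ≤ q ^ d (e ⟨j, hjr'⟩) :=
            Nat.le_self_pow (by have := hd1 (e ⟨j, hjr'⟩); omega) q
          have hA1 : (q ^ d (e ⟨j, hjr'⟩) - q) * q ^ k' + q * q ^ k' =
              q ^ d (e ⟨j, hjr'⟩) * q ^ k' := by
            rw [← add_mul, Nat.sub_add_cancel hqd]
          have hA2 : q * q ^ k' = q ^ k := by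
            rw [hkk, pow_succ, mul_comm]
          have hB2 : Bad2.card = 1 := Finset.card_singleton _
          have hle : (Bad1 ∪ Bad2 ∪ Bad3).card ≤ Bad1.card + Bad2.card + Bad3.card :=
            (Finset.card_union_le _ _).trans (by
              have := Finset.card_union_le Bad1 Bad2
              omega)
          have hd1' := hd1 (e ⟨j, hjr'⟩)
          omega
        have hnotall : ¬ (Finset.univ : Finset ((A ⧸ (e ⟨j, hjr'⟩).1) × (Fin k' → F))) ⊆
            (Bad1 ∪ Bad2 ∪ Bad3) := by
          intro hsub
          have := Finset.card_le_card hsub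
          rw [Finset.card_univ] at this
          omega
        obtain ⟨x, -, hx⟩ := Finset.not_subset.mp hnotall
        refine ⟨x, ?_, ?_, ?_⟩
        · by_contra hng
          exact hx (Finset.mem_union_left _ (Finset.mem_union_left _
            (Finset.mem_product.mpr ⟨Finset.mem_filter.mpr ⟨Finset.mem_univ _, hng⟩,
              Finset.mem_univ _⟩)))
        · rintro ⟨h1, h2⟩
          refine hx (Finset.mem_union_left _ (Finset.mem_union_right _ ?_))
          have : x = ((0 : A ⧸ (e ⟨j, hjr'⟩).1), (0 : Fin k' → F)) := Prod.ext h1 h2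
          rw [this, hBad2]
          exact Finset.mem_singleton_self _
        · rintro i hij σ ⟨hσ1, hσ2⟩
          refine hx (Finset.mem_union_right _ ?_)
          refine Finset.mem_biUnion.mpr ⟨i, Finset.mem_univ _, ?_⟩
          rw [if_pos hij]
          refine Finset.mem_product.mpr ⟨?_, by
            rw [Finset.mem_singleton]; exact hσ2.symm⟩
          rw [Multiset.mem_toFinset, Polynomial.mem_aroots]
          refine ⟨minpoly.ne_zero (IsIntegral.of_finite F (γ (e i))), ?_⟩
          rw [← hσ1, Polynomial.aeval_algHom_apply, minpoly.aeval, map_zero]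
      obtain ⟨⟨g, cc⟩, hg1, hg2, hg3⟩ := hex
      refine ⟨Function.update γ (e ⟨j, hjr'⟩) g, Function.update c (e ⟨j, hjr'⟩) cc,
        ?_, ?_, ?_⟩
      · intro i hi
        rcases Nat.lt_succ_iff_lt_or_eq.mp hi with h' | h'
        · rw [Function.update_of_ne (hnem' i h')]
          exact hgen i h'
        · have hieq : i = ⟨j, hjr'⟩ := Fin.ext h'
          subst hieq
          rw [Function.update_self]
          exact hg1
      · intro i hi
        rcases Nat.lt_succ_iff_lt_or_eq.mp hi with h' | h'
        · rw [Function.update_of_ne (hnem' i h'), Function.update_of_ne (hnem' i h')]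
          exact hnz i h'
        · have hieq : i = ⟨j, hjr'⟩ := Fin.ext h'
          subst hieq
          rw [Function.update_self, Function.update_self]
          exact hg2
      · intro i i' hii' hi' σ
        rcases Nat.lt_succ_iff_lt_or_eq.mp hi' with h' | h'
        · have hi : (i : ℕ) < j := by omega
          rw [Function.update_of_ne (hnem' i hi), Function.update_of_ne (hnem' i hi),
            Function.update_of_ne (hnem' i' h'), Function.update_of_ne (hnem' i' h')]
          exact hpair i i' hii' h' σ
        · have hieq : i' = ⟨j, hjr'⟩ := Fin.ext h'
          subst hieq
          have hi : (i : ℕ) < j := by omega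
          rw [Function.update_of_ne (hnem' i hi), Function.update_of_ne (hnem' i hi),
            Function.update_self, Function.update_self]
          exact hg3 i hi σ
  obtain ⟨γ, c, hgen0, hnz0, hpair0⟩ := key r le_rfl
  -- reindex over ι'
  have hgen : ∀ m : ι', Algebra.adjoin F {γ m} = ⊤ := by
    intro m
    have := hgen0 (e.symm m) (e.symm m).2
    rwa [e.apply_symm_apply] at this
  have hnz : ∀ m : ι', ¬(γ m = 0 ∧ c m = 0) := by
    intro m
    have := hnz0 (e.symm m) (e.symm m).2
    rwa [e.apply_symm_apply] at this
  have hpair : ∀ m m' : ι', ((e.symm m : Fin r) : ℕ) < ((e.symm m' : Fin r) : ℕ) →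
      ∀ σ : (A ⧸ m.1) →ₐ[F] (A ⧸ m'.1), ¬(σ (γ m) = γ m' ∧ c m = c m') := by
    intro m m' hlt
    have := hpair0 (e.symm m) (e.symm m') hlt (e.symm m').2
    rwa [e.apply_symm_apply, e.apply_symm_apply] at this
  -- lift the tuples to A
  obtain ⟨u, hu⟩ := hsurjA (fun m => γ m)
  have hbex := fun j : Fin k' => hsurjA (fun m => algebraMap F (A ⧸ m.1) (c m j))
  choose b hb using hbex
  set a : Fin (k' + 1) → A := Fin.cons u b with hadef
  refine ⟨Finset.image a Finset.univ, ?_, ?_⟩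
  · calc (Finset.image a Finset.univ).card ≤ (Finset.univ : Finset (Fin (k' + 1))).card :=
        Finset.card_image_le
      _ = k' + 1 := by simp
      _ = k := hkk.symm
  -- generation
  intro B hsB hmulB
  set sa : Set A := Set.range a with hsadef
  have hsaB : sa ⊆ (B : Set A) := by
    rw [hsadef]
    rintro x ⟨i, rfl⟩
    exact hsB (by simp [Finset.coe_image])
  set C : Subalgebra F A := Algebra.adjoin F sa with hCdef
  have hu_mem : u ∈ C := Algebra.subset_adjoin ⟨0, by simp [hadef]⟩
  have hb_mem : ∀ j : Fin k', b j ∈ C := fun j =>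
    Algebra.subset_adjoin ⟨j.succ, by simp [hadef]⟩
  -- C = ⊤ via CRT
  have hCtop : C = ⊤ := by
    set f : ∀ m : ι', ↥C →ₐ[F] A ⧸ m.1 :=
      fun m => (Ideal.Quotient.mkₐ F m.1).comp C.val with hfdef
    have hfu : ∀ m : ι', f m ⟨u, hu_mem⟩ = γ m := fun m => hu m
    have hfb : ∀ (j : Fin k') (m : ι'), f m ⟨b j, hb_mem j⟩ = algebraMap F (A ⧸ m.1) (c m j) :=
      fun j m => hb j m
    have hfsurj : ∀ m : ι', Function.Surjective (f m) := by
      intro m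
      have himg : (f m).range = ⊤ := by
        rw [eq_top_iff, ← hgen m]
        refine Algebra.adjoin_le ?_
        rintro x rfl
        exact ⟨⟨u, hu_mem⟩, hfu m⟩
      intro y
      have : y ∈ (f m).range := himg ▸ Algebra.mem_top
      exact this
    set iso : ∀ m : ι', (↥C ⧸ RingHom.ker (f m)) ≃ₐ[F] A ⧸ m.1 :=
      fun m => Ideal.quotientKerAlgEquivOfSurjective (hfsurj m) with hisodef
    have hiso_mk : ∀ (m : ι') (x : ↥C), iso m (Ideal.Quotient.mk _ x) = f m x := by
      intro m x
      rfl
    have hmaxn : ∀ m : ι', (RingHom.ker (f m)).IsMaximal := fun m =>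
      RingHom.ker_isMaximal_of_surjective (f m) (hfsurj m)
    have hnedist : ∀ m m' : ι', m ≠ m' → RingHom.ker (f m) ≠ RingHom.ker (f m') := by
      intro m m' hmm hEq
      set σ : (A ⧸ m.1) ≃ₐ[F] (A ⧸ m'.1) :=
        ((iso m).symm.trans (Ideal.quotientEquivAlgOfEq F hEq)).trans (iso m') with hσdef
      have hσ : ∀ x : ↥C, σ (f m x) = f m' x := by
        intro x
        have h1 : (iso m).symm (f m x) = Ideal.Quotient.mk _ x :=
          (AlgEquiv.symm_apply_eq _).mpr (hiso_mk m x).symm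
        simp only [hσdef, AlgEquiv.trans_apply, h1, Ideal.quotientEquivAlgOfEq_mk]
        exact hiso_mk m' x
      have hσγ : σ (γ m) = γ m' := by
        rw [← hfu m, hσ, hfu m']
      have hσc : c m = c m' := by
        funext j
        have h1 : σ (algebraMap F (A ⧸ m.1) (c m j)) = algebraMap F (A ⧸ m'.1) (c m j) :=
          σ.commutes _
        have h2 : σ (f m ⟨b j, hb_mem j⟩) = f m' ⟨b j, hb_mem j⟩ := hσ _
        rw [hfb, hfb, h1] at h2
        exact (RingHom.injective (algebraMap F (A ⧸ m'.1))) h2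
      have hne' : (e.symm m : Fin r) ≠ (e.symm m' : Fin r) := fun h => hmm (by
        have := congrArg e h
        simpa using this)
      rcases lt_or_gt_of_ne (fun h => hne' (Fin.ext h) :
          ((e.symm m : Fin r) : ℕ) ≠ ((e.symm m' : Fin r) : ℕ)) with hlt | hlt
      · exact hpair m m' hlt σ.toAlgHom ⟨hσγ, hσc⟩
      · refine hpair m' m hlt σ.symm.toAlgHom ⟨?_, hσc.symm⟩
        show σ.symm (γ m') = γ m
        rw [← hσγ, AlgEquiv.symm_apply_apply]
    rw [eq_top_iff]
    intro z _
    obtain ⟨cc, hcc⟩ := crt_surj (fun m => RingHom.ker (f m)) hmaxn hnedist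
      (fun m => (iso m).symm (Ideal.Quotient.mk m.1 z))
    have hcc2 : ∀ m : ι', Ideal.Quotient.mk m.1 (cc : A) = Ideal.Quotient.mk m.1 z := by
      intro m
      have h1 := congrArg (iso m) (hcc m)
      rw [hiso_mk, AlgEquiv.apply_symm_apply] at h1
      exact h1
    have hz : z - (cc : A) = 0 :=
      Φinj _ (fun m => by rw [map_sub, hcc2 m, sub_self])
    have : z = (cc : A) := by
      have := sub_eq_zero.mp hz
      exact this
    exact this ▸ cc.2
  -- span = ⊤
  have hspan : Ideal.span sa = ⊤ := by
    by_contra h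
    obtain ⟨M, hM, hle⟩ := Ideal.exists_le_maximal _ h
    set m : ι' := ⟨M, hM⟩ with hmdef
    rcases not_and_or.mp (hnz m) with hγ | hc
    · refine hγ ?_
      have : u ∈ M := hle (Ideal.subset_span ⟨0, by simp [hadef]⟩)
      rw [← hu m]
      exact Ideal.Quotient.eq_zero_iff_mem.mpr this
    · exfalso
      refine hc ?_
      funext j
      have : b j ∈ M := hle (Ideal.subset_span ⟨j.succ, by simp [hadef]⟩)
      have h0 : algebraMap F (A ⧸ m.1) (c m j) = 0 := by
        rw [← hb j m]
        exact Ideal.Quotient.eq_zero_iff_mem.mpr this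
      have := (RingHom.injective (algebraMap F (A ⧸ m.1)))
        (h0.trans (map_zero (algebraMap F (A ⧸ m.1))).symm)
      exact this
  -- final generation argument
  set B₀ := NonUnitalAlgebra.adjoin F sa with hB₀def
  have claim1 : ∀ x ∈ Algebra.adjoin F sa, ∀ y ∈ B₀, x * y ∈ B₀ := by
    intro x hx
    induction hx using Algebra.adjoin_induction with
    | mem z hz =>
      exact fun y hy => B₀.mul_mem (NonUnitalAlgebra.subset_adjoin F hz) hy
    | algebraMap r =>
      intro y hy
      rw [Algebra.algebraMap_eq_smul_one, smul_mul_assoc, one_mul]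
      exact B₀.smul_mem r hy
    | add x₁ x₂ hx₁ hx₂ ih₁ ih₂ =>
      intro y hy
      rw [add_mul]
      exact B₀.add_mem (ih₁ y hy) (ih₂ y hy)
    | mul x₁ x₂ hx₁ hx₂ ih₁ ih₂ =>
      intro y hy
      rw [mul_assoc]
      exact ih₁ _ (ih₂ y hy)
  have h1B : (1 : A) ∈ B₀ := by
    have h1span : (1 : A) ∈ Ideal.span sa := hspan ▸ Submodule.mem_top
    rw [hsadef] at h1span
    rw [show Ideal.span (Set.range a) = Submodule.span A (Set.range a) from rfl] at h1span
    obtain ⟨w, hw⟩ := (Submodule.mem_span_range_iff_exists_fun A).mp h1span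
    rw [← hw]
    refine sum_mem fun i _ => ?_
    have hwi : w i ∈ Algebra.adjoin F sa := by
      rw [← hCdef, hCtop]; trivial
    have hai : a i ∈ B₀ := NonUnitalAlgebra.subset_adjoin F ⟨i, rfl⟩
    rw [smul_eq_mul]
    exact claim1 (w i) hwi (a i) hai
  have hall : ∀ z : A, z ∈ B₀ := by
    intro z
    have hz : z ∈ Algebra.adjoin F sa := by rw [← hCdef, hCtop]; trivial
    have := claim1 z hz 1 h1B
    rwa [mul_one] at this
  have hB₀B : (B₀ : Set A) ⊆ (B : Set A) := by
    have : B₀ ≤ Submodule.toNonUnitalSubalgebra B (fun x y hx hy => hmulB x hx y hy) :=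
      NonUnitalAlgebra.adjoin_le hsaB
    exact this
  rw [eq_top_iff]
  intro z _
  exact hB₀B (hall z)
end

section
/- Let F be an infinite field and let A be an étale F-algebra of rank n, i.e., a product of finite separable field extensions of F of total dimension n. Then A can be generated by one element as a non-unital F-algebra. -/
open TensorProduct Polynomial

section Aux


lemma finite_comp_shift_eq {F : Type*} [Field F] {p : F[X]} (hp : 0 < p.natDegree) (r : F[X]) :
    {t : F | p.comp (X - C t) = r}.Finite := by
  set S := {t : F | p.comp (X - C t) = r} with hS
  rcases S.eq_empty_or_nonempty with h | ⟨t₀, ht₀⟩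
  · simp [h]
  set K := AlgebraicClosure F
  have hp0 : p ≠ 0 := fun h => by simp [h] at hp
  have hdeg : p.degree ≠ 0 := (natDegree_pos_iff_degree_pos.mp hp).ne'
  obtain ⟨r₀, hr₀⟩ := IsAlgClosed.exists_aeval_eq_zero K p hdeg
  have hpm : p.map (algebraMap F K) ≠ 0 :=
    (Polynomial.map_ne_zero_iff (algebraMap F K).injective).mpr hp0
  set f : F → K := fun t => r₀ + algebraMap F K t - algebraMap F K t₀ with hf
  have hroot : ∀ t ∈ S, (p.map (algebraMap F K)).IsRoot (f t) := by
    intro t ht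
    have h1 : p.comp (X - C t) = p.comp (X - C t₀) := ht.trans ht₀.symm
    have h2 := congrArg (aeval (r₀ + algebraMap F K t)) h1
    rw [aeval_comp, aeval_comp] at h2
    simp only [map_sub, aeval_X, aeval_C, add_sub_cancel_right] at h2
    rw [hr₀, ← eval_map_algebraMap] at h2
    exact h2.symm
  have hinj : Set.InjOn f S := by
    intro a _ b _ hab
    simp only [hf, add_sub_assoc, add_right_inj, sub_left_inj] at hab
    exact (algebraMap F K).injective hab
  letI : DecidableEq K := Classical.decEq K
  have hfin : {x : K | (p.map (algebraMap F K)).IsRoot x}.Finite := by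
    apply Set.Finite.subset (p.map (algebraMap F K)).roots.toFinset.finite_toSet
    intro x hx
    rw [Finset.mem_coe, Multiset.mem_toFinset, mem_roots hpm]
    exact hx
  have : (f '' S).Finite :=
    hfin.subset (by rintro _ ⟨t, ht, rfl⟩; exact hroot t ht)
  exact Set.Finite.of_finite_image this hinj

lemma exists_shifts {F : Type*} [Field F] [Infinite F] {ι : Type*} (s : Finset ι)
    (p : ι → F[X]) (hp : ∀ i, 0 < (p i).natDegree) (bad : ι → Set F)
    (hbad : ∀ i, (bad i).Finite) :
    ∃ c : ι → F, ∀ i ∈ s, c i ∉ bad i ∧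
      ∀ j ∈ s, j ≠ i → (p i).comp (X - C (c i)) ≠ (p j).comp (X - C (c j)) := by
  classical
  induction s using Finset.induction_on with
  | empty => exact ⟨fun _ => 0, by simp⟩
  | @insert a s ha ih =>
    obtain ⟨c, hc⟩ := ih
    set badset : Set F := bad a ∪ ⋃ j ∈ s, {t | (p a).comp (X - C t) = (p j).comp (X - C (c j))}
      with hbs
    have hfin : badset.Finite :=
      (hbad a).union (Set.Finite.biUnion s.finite_toSet fun j _ => finite_comp_shift_eq (hp a) _)
    obtain ⟨t, ht⟩ := hfin.infinite_compl.nonempty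
    rw [Set.mem_compl_iff, hbs, Set.mem_union, not_or] at ht
    obtain ⟨ht1, ht2⟩ := ht
    have ht2' : ∀ j ∈ s, (p a).comp (X - C t) ≠ (p j).comp (X - C (c j)) := by
      intro j hj h
      exact ht2 (Set.mem_biUnion hj h)
    refine ⟨Function.update c a t, ?_⟩
    intro i hi
    rcases Finset.mem_insert.mp hi with rfl | his
    · rw [Function.update_self]
      refine ⟨ht1, ?_⟩
      intro j hj hji
      rcases Finset.mem_insert.mp hj with rfl | hjs
      · exact absurd rfl hji
      · rw [Function.update_of_ne (ne_of_mem_of_not_mem hjs ha)]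
        exact ht2' j hjs
    · have hia : i ≠ a := ne_of_mem_of_not_mem his ha
      rw [Function.update_of_ne hia]
      refine ⟨(hc i his).1, ?_⟩
      intro j hj hji
      rcases Finset.mem_insert.mp hj with rfl | hjs
      · rw [Function.update_self]
        exact fun h => ht2' i his h.symm
      · rw [Function.update_of_ne (ne_of_mem_of_not_mem hjs ha)]
        exact (hc i his).2 j hjs hji

end Aux

/-- Every étale algebra of rank n over an infinite field F can be generated by one element as
a non-unital F-algebra. -/
theorem etale_one_generator (F : Type) [Field F] [Infinite F]
    (A : Type) [CommRing A] [Algebra F A] [Algebra.Etale F A]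
    (n : ℕ) (hn : Module.finrank F A = n) :
    ∃ a : A, GeneratesAsNonUnitalAlgebra F ({a} : Set A) := by
  classical
  rcases subsingleton_or_nontrivial A with h | h
  · refine ⟨0, fun B _ _ => ?_⟩
    rw [eq_top_iff]
    intro x _
    exact (Subsingleton.elim (0 : A) x) ▸ B.zero_mem
  -- basic instances
  haveI : IsReduced A := Algebra.FormallyUnramified.isReduced_of_field F A
  haveI : Module.Finite F A := Algebra.FormallyUnramified.finite_of_free F A
  haveI : IsArtinianRing A := isArtinian_of_tower F inferInstance
  haveI : Finite {I : Ideal A | I.IsMaximal} := (IsArtinianRing.setOfPred_isMaximal_finite A).to_subtype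
  letI : Fintype {I : Ideal A | I.IsMaximal} := Fintype.ofFinite _
  set ι := {I : Ideal A | I.IsMaximal}
  -- the CRT algebra isomorphism
  set φ : A →ₐ[F] ∀ I : ι, A ⧸ I.1 := Pi.algHom _ _ fun I => Ideal.Quotient.mkₐ F I.1 with hφ
  have hbij : Function.Bijective φ := by
    have hb := (IsArtinianRing.equivPi A).bijective
    refine ⟨fun x y hxy => hb.1 ?_, fun f => ?_⟩
    · funext m
      exact congrFun hxy ⟨m.asIdeal, m.isMaximal⟩
    · obtain ⟨x, hx⟩ := hb.2 (fun m => f ⟨m.asIdeal, m.isMaximal⟩)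
      refine ⟨x, ?_⟩
      funext I
      exact congrFun hx ⟨I.1, I.2⟩
  haveI hfinQ : ∀ I : ι, Module.Finite F (A ⧸ I.1) := fun I =>
    Module.Finite.of_surjective (Ideal.Quotient.mkₐ F I.1).toLinearMap
      Ideal.Quotient.mk_surjective
  -- choose primitive elements
  have hα : ∀ I : ι, ∃ α : A ⧸ I.1,
      (minpoly F α).natDegree = Module.finrank F (A ⧸ I.1) := by
    intro I
    haveI : I.1.IsMaximal := I.2
    letI : Field (A ⧸ I.1) := Ideal.Quotient.field I.1
    haveI : Algebra.IsSeparable F (A ⧸ I.1) :=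
      Algebra.FormallyUnramified.isSeparable F (A ⧸ I.1)
    obtain ⟨α, hα⟩ := Field.exists_primitive_element F (A ⧸ I.1)
    refine ⟨α, ?_⟩
    have h2 := IntermediateField.adjoin.finrank (IsIntegral.of_finite F α)
    rw [hα, IntermediateField.finrank_top'] at h2
    exact h2.symm
  choose α hpdeg using hα
  set p : ι → F[X] := fun I => minpoly F (α I) with hpdef
  have hppos : ∀ I : ι, 0 < (p I).natDegree := by
    intro I
    haveI : I.1.IsMaximal := I.2
    haveI : Nontrivial (A ⧸ I.1) := Ideal.Quotient.nontrivial_iff.mpr this.ne_top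
    rw [hpdeg I]
    exact Module.finrank_pos
  set bad : ι → Set F := fun I => {t | α I + algebraMap F (A ⧸ I.1) t = 0} with hbaddef
  have hbad : ∀ I : ι, (bad I).Finite := by
    intro I
    haveI : I.1.IsMaximal := I.2
    haveI : Nontrivial (A ⧸ I.1) := Ideal.Quotient.nontrivial_iff.mpr this.ne_top
    apply Set.Subsingleton.finite
    intro u hu v hv
    have : algebraMap F (A ⧸ I.1) u = algebraMap F (A ⧸ I.1) v := by
      have := hu.trans hv.symm
      exact add_left_cancel this
    exact (algebraMap F (A ⧸ I.1)).injective this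
  obtain ⟨c, hc⟩ := exists_shifts Finset.univ p hppos bad hbad
  set x : ∀ I : ι, A ⧸ I.1 := fun I => α I + algebraMap F (A ⧸ I.1) (c I) with hxdef
  obtain ⟨a, ha⟩ := hbij.2 x
  set q : ι → F[X] := fun I => minpoly F (x I) with hqdef
  have hq : ∀ I : ι, q I = (p I).comp (X - C (c I)) := fun I =>
    minpoly.add_algebraMap (α I) (c I)
  have hx0 : ∀ I : ι, x I ≠ 0 := fun I h => (hc I (Finset.mem_univ I)).1 h
  have hxint : ∀ I : ι, IsIntegral F (x I) := fun I => IsIntegral.of_finite F (x I)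
  have hqmonic : ∀ I : ι, (q I).Monic := fun I => minpoly.monic (hxint I)
  have hqirr : ∀ I : ι, Irreducible (q I) := by
    intro I
    haveI : I.1.IsMaximal := I.2
    haveI : I.1.IsPrime := this.isPrime
    exact minpoly.irreducible (hxint I)
  have hqdeg : ∀ I : ι, (q I).natDegree = Module.finrank F (A ⧸ I.1) := by
    intro I
    rw [hq I, natDegree_comp, natDegree_X_sub_C, mul_one, hpdeg I]
  have hqne : ∀ I J : ι, I ≠ J → q I ≠ q J := by
    intro I J hIJ
    rw [hq I, hq J]
    exact (hc I (Finset.mem_univ I)).2 J (Finset.mem_univ J) (Ne.symm hIJ)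
  have hqcop : ∀ I J : ι, I ≠ J → IsCoprime (q I) (q J) := by
    intro I J hIJ
    refine (hqirr I).coprime_iff_not_dvd.mpr fun hdvd => ?_
    exact hqne I J hIJ (Polynomial.eq_of_monic_of_associated (hqmonic I) (hqmonic J)
      ((hqirr I).associated_of_dvd (hqirr J) hdvd))
  have haint : IsIntegral F a := IsIntegral.of_finite F a
  set m : F[X] := minpoly F a with hmdef
  -- each component of φ, applied to aeval a, gives aeval (x I)
  have hcomp : ∀ (r : F[X]) (I : ι), aeval (x I) r = (Pi.evalAlgHom F _ I) (φ (aeval a r)) := by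
    intro r I
    have hxI : (Pi.evalAlgHom F (fun I : ι => A ⧸ I.1) I) (φ a) = x I := by rw [ha]; rfl
    rw [← hxI, Polynomial.aeval_algHom_apply, Polynomial.aeval_algHom_apply]
  have hqdvd : ∀ I : ι, q I ∣ m := by
    intro I
    apply minpoly.dvd
    rw [hcomp m I, minpoly.aeval, map_zero, map_zero]
  set Q : F[X] := ∏ I : ι, q I with hQdef
  have hQmonic : Q.Monic := monic_prod_of_monic _ _ fun I _ => hqmonic I
  have hQdvdm : Q ∣ m :=
    Finset.prod_dvd_of_coprime
      (fun I _ J _ hIJ => hqcop I J hIJ) (fun I _ => hqdvd I)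
  have hmdvdQ : m ∣ Q := by
    apply minpoly.dvd
    apply hbij.1
    rw [map_zero]
    funext I
    have h1 : φ (aeval a Q) I = (Pi.evalAlgHom F _ I) (φ (aeval a Q)) := rfl
    rw [h1, ← hcomp Q I, hQdef, map_prod]
    exact Finset.prod_eq_zero (Finset.mem_univ I) (minpoly.aeval F (x I))
  have hmQ : m = Q :=
    Polynomial.eq_of_monic_of_associated (minpoly.monic haint) hQmonic
      (associated_of_dvd_dvd hmdvdQ hQdvdm)
  -- degrees
  have hdegQ : Q.natDegree = n := by
    have h1 : Q.natDegree = ∑ I : ι, (q I).natDegree :=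
      Polynomial.natDegree_prod _ _ fun I _ => (hqmonic I).ne_zero
    rw [h1]
    have h2 : Module.finrank F A = ∑ I : ι, Module.finrank F (A ⧸ I.1) := by
      rw [(AlgEquiv.ofBijective φ hbij).toLinearEquiv.finrank_eq, Module.finrank_pi_fintype]
    rw [← hn, h2]
    exact Finset.sum_congr rfl fun I _ => hqdeg I
  have hmdeg : m.natDegree = n := by rw [hmQ, hdegQ]
  have hc0 : m.coeff 0 ≠ 0 := by
    rw [hmQ, coeff_zero_eq_eval_zero, hQdef, eval_prod]
    apply Finset.prod_ne_zero_iff.mpr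
    intro I _
    rw [← coeff_zero_eq_eval_zero]
    intro h
    haveI : I.1.IsMaximal := I.2
    haveI : I.1.IsPrime := this.isPrime
    exact hx0 I ((minpoly.coeff_zero_eq_zero (hxint I)).mp h)
  have hnpos : 0 < n := hn ▸ Module.finrank_pos
  -- final argument
  refine ⟨a, fun B hB hmul => ?_⟩
  have haB : a ∈ B := hB rfl
  have hpow : ∀ k : ℕ, a ^ (k + 1) ∈ B := by
    intro k
    induction k with
    | zero => simpa using haB
    | succ k ih => rw [pow_succ]; exact hmul _ ih _ haB
  have hsum : ∑ i ∈ Finset.range (m.natDegree + 1), m.coeff i • a ^ i = 0 := by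
    rw [← Polynomial.aeval_eq_sum_range (p := m) a, minpoly.aeval]
  rw [Finset.sum_range_succ'] at hsum
  have h1B : (1 : A) ∈ B := by
    have hc1 : m.coeff 0 • (1 : A) =
        -∑ i ∈ Finset.range m.natDegree, m.coeff (i + 1) • a ^ (i + 1) := by
      rw [eq_neg_iff_add_eq_zero, add_comm]
      simpa using hsum
    have hmem : m.coeff 0 • (1 : A) ∈ B := by
      rw [hc1]
      exact B.neg_mem (Submodule.sum_mem B fun i _ => B.smul_mem _ (hpow i))
    have : (m.coeff 0)⁻¹ • (m.coeff 0 • (1 : A)) = 1 := by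
      rw [smul_smul, inv_mul_cancel₀ hc0, one_smul]
    exact this ▸ B.smul_mem _ hmem
  have hpow' : ∀ k : ℕ, a ^ k ∈ B := by
    intro k
    cases k with
    | zero => simpa using h1B
    | succ k => exact hpow k
  have hli : LinearIndependent F fun i : Fin n => a ^ (i : ℕ) := by
    have := linearIndependent_pow (K := F) a
    rwa [← hmdef, hmdeg] at this
  have hspan : Submodule.span F (Set.range fun i : Fin n => a ^ (i : ℕ)) = ⊤ := by
    haveI : Nonempty (Fin n) := ⟨⟨0, hnpos⟩⟩
    exact hli.span_eq_top_of_card_eq_finrank (by simpa using hn.symm)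
  rw [eq_top_iff, ← hspan]
  apply Submodule.span_le.mpr
  rintro _ ⟨i, rfl⟩
  exact hpow' (i : ℕ)
end

section
/- Let F be an infinite field, let A be a finite-dimensional algebra over F identified with the F-points of affine space A^r via a choice of basis (r = dim_F A). Then there is a Zariski-open subscheme U of (A^r)^n such that for every field extension K/F, the K-points of U are exactly the n-tuples (x_1, ..., x_n) ∈ (A ⊗_F K)^n that generate A ⊗_F K as a non-unital K-algebra; in particular, the property of n elements generating A is Zariski open and stable under field extension in this sense. -/
open TensorProduct

/-! ### Auxiliary constructions

`MIdx n k` is a finite index type for the iterated products (of "doubling depth `k`") of `n`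
chosen elements in a non-associative algebra; `Wvec v k` is the corresponding family of iterated
products of the family `v`, and `Ply F n r c k` is the corresponding family of polynomials in
the coordinates (with respect to a basis, with structure constants `c`). -/

/-- Index type for iterated products: at level `k+1` we take either an element from level `k`
or a product of two elements from level `k`. -/
def MIdx (n : ℕ) : ℕ → Type
  | 0 => Fin n
  | k + 1 => MIdx n k ⊕ MIdx n k × MIdx n k

instance MIdx.instFintype (n : ℕ) : ∀ k, Fintype (MIdx n k)
  | 0 => inferInstanceAs (Fintype (Fin n))
  | k + 1 =>
    letI := MIdx.instFintype n k
    inferInstanceAs (Fintype (MIdx n k ⊕ MIdx n k × MIdx n k))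

/-- The iterated products of the family `v`, indexed by `MIdx n k`. -/
def Wvec {V : Type} [Mul V] {n : ℕ} (v : Fin n → V) : ∀ k, MIdx n k → V
  | 0 => v
  | k + 1 => Sum.elim (Wvec v k) fun p => Wvec v k p.1 * Wvec v k p.2

/-- The coordinates of the iterated products, as polynomials in the coordinates of the `n`
original elements; `c` is the family of structure constants of the algebra. -/
noncomputable def Ply (F : Type) [CommRing F] (n r : ℕ) (c : Fin r → Fin r → Fin r → F) :
    ∀ k, MIdx n k → Fin r → MvPolynomial (Fin n × Fin r) F
  | 0 => fun i j => MvPolynomial.X (i, j)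
  | k + 1 => Sum.elim (fun m => Ply F n r c k m) fun p j =>
      ∑ j1, ∑ j2, MvPolynomial.C (c j1 j2 j) * Ply F n r c k p.1 j1 * Ply F n r c k p.2 j2

section CoordLemmas

variable {F : Type} [Field F] {A : Type} [NonUnitalNonAssocRing A] [Module F A]
    [SMulCommClass F A A] [IsScalarTower F A A]
    {K : Type} [Field K] [Algebra F K] {r n : ℕ}

lemma repr_mul_s15 (b : Module.Basis (Fin r) F A) (u w : K ⊗[F] A) (l : Fin r) :
    (b.baseChange K).repr (u * w) l
      = ∑ j1, ∑ j2, algebraMap F K (b.repr (b j1 * b j2) l) *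
          ((b.baseChange K).repr u j1 * (b.baseChange K).repr w j2) := by
  set e := b.baseChange K with he
  conv_lhs => rw [← e.sum_repr u, ← e.sum_repr w]
  rw [Finset.sum_mul_sum]
  simp only [smul_mul_assoc, mul_smul_comm]
  rw [map_sum, Finsupp.finset_sum_apply]
  refine Finset.sum_congr rfl fun j1 _ => ?_
  rw [map_sum, Finsupp.finset_sum_apply]
  refine Finset.sum_congr rfl fun j2 _ => ?_
  have hee : e j1 * e j2 = (1 : K) ⊗ₜ[F] (b j1 * b j2) := by
    rw [he, Module.Basis.baseChange_apply, Module.Basis.baseChange_apply,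
      Algebra.TensorProduct.tmul_mul_tmul, one_mul]
  rw [hee, map_smul, map_smul, Finsupp.smul_apply, Finsupp.smul_apply,
    Module.Basis.baseChange_repr_tmul, smul_eq_mul, smul_eq_mul,
    ← Algebra.algebraMap_eq_smul_one]
  ring

lemma repr_Wvec (b : Module.Basis (Fin r) F A) (x : Fin n → Fin r → K) :
    ∀ k (m : MIdx n k) (j : Fin r),
      (b.baseChange K).repr
          (Wvec (fun i => ∑ j', x i j' • ((1 : K) ⊗ₜ[F] b j')) k m) j
        = MvPolynomial.aeval (fun p : Fin n × Fin r => x p.1 p.2)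
            (Ply F n r (fun j1 j2 l => b.repr (b j1 * b j2) l) k m j) := by
  intro k
  induction k with
  | zero =>
    intro m j
    show (b.baseChange K).repr (∑ j', x m j' • ((1 : K) ⊗ₜ[F] b j')) j = _
    simp only [← Module.Basis.baseChange_apply (S := K) b]
    simp only [Ply, map_sum, map_smul, Module.Basis.repr_self, MvPolynomial.aeval_X,
      Finsupp.smul_apply, Finsupp.single_apply, smul_eq_mul, mul_ite, mul_one, mul_zero]
    simp [Finsupp.single_apply, eq_comm]
  | succ k ih =>
    intro m j
    cases m with
    | inl m => exact ih m j
    | inr p =>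
      show (b.baseChange K).repr (Wvec _ k p.1 * Wvec _ k p.2) j = _
      rw [repr_mul_s15 b]
      show _ = MvPolynomial.aeval _
        (∑ j1, ∑ j2, MvPolynomial.C _ * Ply F n r _ k p.1 j1 * Ply F n r _ k p.2 j2)
      rw [map_sum]
      refine Finset.sum_congr rfl fun j1 _ => ?_
      rw [map_sum]
      refine Finset.sum_congr rfl fun j2 _ => ?_
      conv_rhs => rw [map_mul, map_mul, MvPolynomial.aeval_C]
      rw [ih p.1 j1, ih p.2 j2, mul_assoc]

end CoordLemmas

/-- A finite family spans a space of dimension `r` iff some `r × r` minor of its coordinate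
matrix is invertible. -/
lemma span_eq_top_iff_det {K V ι : Type} [Field K] [AddCommGroup V] [Module K V]
    [Fintype ι] {r : ℕ} (e : Module.Basis (Fin r) K V) (u : ι → V) :
    Submodule.span K (Set.range u) = ⊤ ↔
      ∃ g : Fin r → ι, (Matrix.of fun i j => e.repr (u (g i)) j).det ≠ 0 := by
  have hmat : ∀ g : Fin r → ι,
      (Matrix.of fun i j => e.repr (u (g i)) j).det = e.det (u ∘ g) := by
    intro g
    rw [Module.Basis.det_apply, ← Matrix.det_transpose]
    rfl
  constructor
  · intro hspan
    obtain ⟨s, hsu, hs_span, hs_li⟩ := exists_linearIndependent K (Set.range u)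
    rw [hspan] at hs_span
    have hsfin : s.Finite := (Set.finite_range u).subset hsu
    haveI := hsfin.fintype
    let bs : Module.Basis s K V := Module.Basis.mk hs_li (by rw [Subtype.range_val, hs_span])
    have hcard : Fintype.card s = r := by
      rw [← Module.finrank_eq_card_basis bs, Module.finrank_eq_card_basis e, Fintype.card_fin]
    let f : Fin r ≃ s := (Fintype.equivFinOfCardEq hcard).symm
    choose g hgspec using fun i : Fin r => hsu (f i).2
    refine ⟨g, ?_⟩
    rw [hmat, ← isUnit_iff_ne_zero, ← Module.Basis.is_basis_iff_det]
    have hug : u ∘ g = Subtype.val ∘ f := funext fun i => hgspec i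
    rw [hug]
    constructor
    · exact hs_li.comp f f.injective
    · rw [Set.range_comp, Set.range_eq_univ.mpr f.surjective, Set.image_univ,
        Subtype.range_val, hs_span]
  · rintro ⟨g, hg⟩
    rw [hmat] at hg
    obtain ⟨-, hspan⟩ := (Module.Basis.is_basis_iff_det e).mpr (isUnit_iff_ne_zero.mpr hg)
    rw [eq_top_iff, ← hspan]
    exact Submodule.span_mono (Set.range_comp_subset_range g u)

/-- Bilinearity of multiplication: products of elements of spans land in any submodule
containing the products of the generators. -/
lemma mul_mem_of_mem_span {K V : Type} [Field K] [NonUnitalNonAssocRing V]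
    [Module K V] [SMulCommClass K V V] [IsScalarTower K V V]
    {s : Set V} {P : Submodule K V}
    (h : ∀ a ∈ s, ∀ c ∈ s, a * c ∈ P)
    {u w : V} (hu : u ∈ Submodule.span K s) (hw : w ∈ Submodule.span K s) :
    u * w ∈ P := by
  induction hu, hw using Submodule.span_induction₂ with
  | mem_mem a c ha hc => exact h a ha c hc
  | zero_left w hw => rw [zero_mul]; exact P.zero_mem
  | zero_right u hu => rw [mul_zero]; exact P.zero_mem
  | add_left a c w _ _ _ ha hc => rw [add_mul]; exact P.add_mem ha hc
  | add_right u a c _ _ _ ha hc => rw [mul_add]; exact P.add_mem ha hc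
  | smul_left k a w _ _ ha => rw [smul_mul_assoc]; exact P.smul_mem k ha
  | smul_right k u a _ _ ha => rw [mul_smul_comm]; exact P.smul_mem k ha

/-- There is a Zariski-open subscheme U of (𝔸ʳ)ⁿ (described by an ideal I of polynomials in
the n·r coordinates: a point lies in U iff some element of I does not vanish at it) whose
K-points, for every field extension K/F, are exactly the n-tuples generating A ⊗ K as a
non-unital K-algebra. -/
theorem generating_tuples_open (F : Type) [Field F] [Infinite F]
    (A : Type) [NonUnitalNonAssocRing A] [Module F A]
    [SMulCommClass F A A] [IsScalarTower F A A]
    (r : ℕ) (b : Module.Basis (Fin r) F A) (n : ℕ) :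
    ∃ I : Ideal (MvPolynomial (Fin n × Fin r) F),
      ∀ (K : Type) [Field K] [Algebra F K], ∀ x : Fin n → Fin r → K,
        ((∃ f ∈ I, MvPolynomial.aeval (fun p : Fin n × Fin r => x p.1 p.2) f ≠ 0) ↔
          GeneratesAsNonUnitalAlgebra K
            (Set.range fun i : Fin n =>
              ∑ j : Fin r, x i j • ((1 : K) ⊗ₜ[F] b j))) := by
  classical
  set c : Fin r → Fin r → Fin r → F := fun j1 j2 l => b.repr (b j1 * b j2) l with hc
  -- the polynomial "minors"
  set D : (Fin r → MIdx n r) → MvPolynomial (Fin n × Fin r) F :=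
    fun g => (Matrix.of fun i j => Ply F n r c r (g i) j).det with hD
  refine ⟨Ideal.span (Set.range D), ?_⟩
  intro K _ _ x
  set φ : MvPolynomial (Fin n × Fin r) F →ₐ[F] K :=
    MvPolynomial.aeval (fun p : Fin n × Fin r => x p.1 p.2) with hφ
  set v : Fin n → K ⊗[F] A := fun i => ∑ j', x i j' • ((1 : K) ⊗ₜ[F] b j') with hv
  set e : Module.Basis (Fin r) K (K ⊗[F] A) := b.baseChange K with he
  haveI : FiniteDimensional K (K ⊗[F] A) := Module.Finite.of_basis e
  set T : ℕ → Submodule K (K ⊗[F] A) :=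
    fun k => Submodule.span K (Set.range (Wvec v k)) with hT
  -- basic properties of the chain T
  have hle : ∀ k, T k ≤ T (k + 1) := by
    intro k
    apply Submodule.span_mono
    rintro _ ⟨m, rfl⟩
    exact ⟨Sum.inl m, rfl⟩
  have hmono : Monotone T := monotone_nat_of_le_succ hle
  have hmul : ∀ k, ∀ u ∈ T k, ∀ w ∈ T k, u * w ∈ T (k + 1) := by
    intro k u hu w hw
    refine mul_mem_of_mem_span ?_ hu hw
    rintro _ ⟨p, rfl⟩ _ ⟨q, rfl⟩
    exact Submodule.subset_span ⟨Sum.inr (p, q), rfl⟩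
  have hstep : ∀ k, T k = T (k + 1) → T (k + 1) = T (k + 2) := by
    intro k hk
    refine le_antisymm (hle _) ?_
    rw [hT]
    refine Submodule.span_le.mpr ?_
    rintro _ ⟨m, rfl⟩
    cases m with
    | inl m => exact Submodule.subset_span ⟨m, rfl⟩
    | inr p =>
      show Wvec v (k + 1) p.1 * Wvec v (k + 1) p.2 ∈ T (k + 1)
      have h1 : Wvec v (k + 1) p.1 ∈ T k := hk.ge (Submodule.subset_span ⟨p.1, rfl⟩)
      have h2 : Wvec v (k + 1) p.2 ∈ T k := hk.ge (Submodule.subset_span ⟨p.2, rfl⟩)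
      exact hmul k _ h1 _ h2
  -- stabilization by dimension count
  have hstab : T r = T (r + 1) := by
    have claim : ∀ k, T k = T (k + 1) ∨ k + 1 ≤ Module.finrank K (T (k + 1)) := by
      intro k
      induction k with
      | zero =>
        by_cases h0 : T 0 = T 1
        · exact Or.inl h0
        · refine Or.inr ?_
          have := Submodule.finrank_lt_finrank_of_lt (lt_of_le_of_ne (hle 0) h0)
          omega
      | succ k ihk =>
        rcases ihk with h | h
        · exact Or.inl (hstep k h)
        · by_cases h1 : T (k + 1) = T (k + 2)
          · exact Or.inl h1
          · refine Or.inr ?_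
            have := Submodule.finrank_lt_finrank_of_lt (lt_of_le_of_ne (hle (k + 1)) h1)
            omega
    rcases claim r with h | h
    · exact h
    · exfalso
      have h1 : Module.finrank K (T (r + 1)) ≤ Module.finrank K (K ⊗[F] A) :=
        Submodule.finrank_le _
      have h2 : Module.finrank K (K ⊗[F] A) = r := by
        rw [Module.finrank_eq_card_basis e, Fintype.card_fin]
      omega
  -- generation is equivalent to T r = ⊤
  have hgen : GeneratesAsNonUnitalAlgebra K (Set.range v) ↔ T r = ⊤ := by
    constructor
    · intro hG
      refine hG (T r) ?_ ?_
      · rintro _ ⟨i, rfl⟩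
        exact hmono (Nat.zero_le r) (Submodule.subset_span ⟨i, rfl⟩)
      · intro u hu w hw
        rw [hstab]
        exact hmul r u hu w hw
    · intro htop B hB hBmul
      rw [eq_top_iff, ← htop]
      have : ∀ k, T k ≤ B := by
        intro k
        induction k with
        | zero => exact Submodule.span_le.mpr (by rintro _ ⟨i, rfl⟩; exact hB ⟨i, rfl⟩)
        | succ k ihk =>
          refine Submodule.span_le.mpr ?_
          rintro _ ⟨m, rfl⟩
          cases m with
          | inl m => exact ihk (Submodule.subset_span ⟨m, rfl⟩)
          | inr p =>
            exact hBmul _ (ihk (Submodule.subset_span ⟨p.1, rfl⟩))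
              _ (ihk (Submodule.subset_span ⟨p.2, rfl⟩))
      exact this r
  -- evaluation of the polynomial minors
  have heval : ∀ g : Fin r → MIdx n r,
      φ (D g) = (Matrix.of fun i j => e.repr (Wvec v r (g i)) j).det := by
    intro g
    rw [hD]
    rw [show φ ((Matrix.of fun i j => Ply F n r c r (g i) j).det)
        = ((Matrix.of fun i j => Ply F n r c r (g i) j).map φ).det from
      RingHom.map_det φ.toRingHom _]
    congr 1
    ext i j
    exact (repr_Wvec b x r (g i) j).symm
  constructor
  · rintro ⟨f, hfI, hf⟩
    rw [hgen]
    rw [span_eq_top_iff_det e (Wvec v r)]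
    by_contra hcon
    push_neg at hcon
    apply hf
    have hker : Ideal.span (Set.range D) ≤ RingHom.ker φ.toRingHom := by
      rw [Ideal.span_le]
      rintro _ ⟨g, rfl⟩
      show φ (D g) = 0
      rw [heval g]
      simpa using hcon g
    exact hker hfI
  · intro hG
    have := (span_eq_top_iff_det e (Wvec v r)).mp (hgen.mp hG)
    obtain ⟨g, hg⟩ := this
    exact ⟨D g, Ideal.subset_span ⟨g, rfl⟩, by rw [heval g]; exact hg⟩
end

section
/- Let F be a finite field. Every finite-dimensional central simple F-algebra is isomorphic to a matrix algebra Mat_n(F) for some n; consequently, every form of Mat_n(F) over a finite field F is isomorphic to Mat_n(F). -/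
open TensorProduct

open Module

/-- Conjugating endomorphisms by a linear equivalence, as a ring isomorphism. -/
def LinearEquiv.endRingEquiv {R M N : Type*} [Semiring R] [AddCommMonoid M] [AddCommMonoid N]
    [Module R M] [Module R N] (e : M ≃ₗ[R] N) : Module.End R M ≃+* Module.End R N where
  toFun f := (e.toLinearMap.comp f).comp e.symm.toLinearMap
  invFun g := (e.symm.toLinearMap.comp g).comp e.toLinearMap
  left_inv f := by ext x; simp
  right_inv g := by ext x; simp
  map_mul' f g := by ext x; simp [Module.End.mul_apply]
  map_add' f g := by ext x; simp

/-- The annihilator of a submodule (viewed as a module) of a ring is a two-sided ideal. -/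
def annTwoSided (A : Type*) [Ring A] (m : Submodule A A) : TwoSidedIdeal A :=
  TwoSidedIdeal.mk' {r : A | ∀ x ∈ m, r * x = 0}
    (fun x hx => by simp)
    (fun {a b} ha hb x hx => by rw [add_mul, ha x hx, hb x hx, add_zero])
    (fun {a} ha x hx => by rw [neg_mul, ha x hx, neg_zero])
    (fun {a b} hb x hx => by rw [mul_assoc, hb x hx, mul_zero])
    (fun {a b} ha x hx => by rw [mul_assoc]; exact ha _ (m.smul_mem b hx))

/-- Any two simple submodules of a simple ring are isomorphic as modules. -/
theorem simple_submodules_iso (A : Type*) [Ring A] [IsSimpleRing A]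
    (I m : Submodule A A) [hsI : IsSimpleModule A ↥I] [hsm : IsSimpleModule A ↥m] :
    Nonempty (↥I ≃ₗ[A] ↥m) := by
  have hI : IsAtom I := isSimpleModule_iff_isAtom.mp hsI
  have hm : IsAtom m := isSimpleModule_iff_isAtom.mp hsm
  have hann : ¬ ((I : Set A) ⊆ {r | ∀ x ∈ m, r * x = 0}) := by
    intro hsub
    rcases IsSimpleRing.simple.eq_bot_or_eq_top (annTwoSided A m) with h | h
    · refine hI.1 (le_bot_iff.mp fun z hz => ?_)
      have : z ∈ annTwoSided A m := by
        rw [annTwoSided, TwoSidedIdeal.mem_mk']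
        · exact hsub hz
        all_goals intros; try assumption
      rw [h] at this
      simpa using this
    · have h1 : (1 : A) ∈ annTwoSided A m := by rw [h]; trivial
      rw [annTwoSided, TwoSidedIdeal.mem_mk'] at h1
      · exact hm.1 (le_bot_iff.mp fun x hx => by simpa using h1 x hx)
      all_goals intros; try assumption
  obtain ⟨z, hzI, hz⟩ := Set.not_subset.mp hann
  simp only [Set.mem_setOf_eq, not_forall] at hz
  obtain ⟨x0, hx0m, hzx0⟩ := hz
  let f : ↥I →ₗ[A] ↥m :=
    { toFun := fun w => ⟨w.1 * x0, m.smul_mem w.1 hx0m⟩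
      map_add' := fun u v => by ext; simp [add_mul]
      map_smul' := fun a w => by ext; simp [mul_assoc, smul_eq_mul] }
  have hf : f ≠ 0 := by
    intro h
    have := congrArg (fun g => (g ⟨z, hzI⟩ : ↥m).1) h
    simpa [f] using (hzx0 this)
  exact ⟨LinearEquiv.ofBijective f (f.bijective_of_ne_zero hf)⟩

theorem isSemisimpleRing_of_simple_artinian (A : Type*) [Ring A] [IsSimpleRing A]
    [IsArtinian A A] : IsSemisimpleRing A := by
  apply IsSemisimpleModule.of_sSup_simples_eq_top
  set s := sSup {m : Submodule A A | IsSimpleModule A ↥m} with hs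
  have hright : ∀ b : A, s.map (LinearMap.toSpanSingleton A A b) ≤ s := by
    intro b
    rw [hs, sSup_eq_iSup', Submodule.map_iSup]
    apply iSup_le
    rintro ⟨m, hm⟩
    haveI : IsSimpleModule A ↥m := hm
    set f : ↥m →ₗ[A] A := (LinearMap.toSpanSingleton A A b).comp m.subtype with hf
    have hrange : LinearMap.range f = Submodule.map (LinearMap.toSpanSingleton A A b) m := by
      rw [hf, LinearMap.range_comp, Submodule.range_subtype]
    rcases f.injective_or_eq_zero with hinj | hzero
    · haveI : IsSimpleModule A ↥(LinearMap.range f) :=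
        IsSimpleModule.congr (LinearEquiv.ofInjective f hinj).symm
      rw [← hrange]
      exact le_iSup_of_le ⟨LinearMap.range f, this⟩ le_rfl
    · rw [← hrange, hzero, LinearMap.range_zero]
      exact bot_le
  have hmem_right : ∀ a ∈ s, ∀ b : A, a * b ∈ s := by
    intro a ha b
    have : a * b ∈ s.map (LinearMap.toSpanSingleton A A b) :=
      ⟨a, ha, by simp [LinearMap.toSpanSingleton_apply, smul_eq_mul]⟩
    exact hright b this
  let J : TwoSidedIdeal A := TwoSidedIdeal.mk' (s : Set A) s.zero_mem
    (fun ha hb => s.add_mem ha hb) (fun ha => s.neg_mem ha)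
    (fun {a b} hb => s.smul_mem a hb) (fun {a b} ha => hmem_right a ha b)
  have hmemJ : ∀ x : A, x ∈ J ↔ x ∈ s := fun x => TwoSidedIdeal.mem_mk' _ _ _ _ _ _ x
  haveI : IsAtomic (Submodule A A) :=
    isAtomic_of_orderBot_wellFounded_lt (wellFounded_lt)
  obtain ⟨a, ha, -⟩ := ((IsAtomic.eq_bot_or_exists_atom_le (⊤ : Submodule A A)).resolve_left
    (by simpa using (bot_ne_top (α := Submodule A A)).symm))
  have has : a ≤ s := le_sSup (isSimpleModule_iff_isAtom.mpr ha)
  obtain ⟨x, hxa, hx0⟩ := Submodule.ne_bot_iff a |>.mp ha.1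
  have hJtop : J = ⊤ := by
    rcases IsSimpleRing.simple.eq_bot_or_eq_top J with h | h
    · exfalso
      have : x ∈ J := (hmemJ x).mpr (has hxa)
      rw [h] at this
      exact hx0 (by simpa using this)
    · exact h
  rw [Submodule.eq_top_iff']
  intro y
  exact (hmemJ y).mp (by rw [hJtop]; trivial)

theorem key (F : Type) [Field F] [Finite F] (A : Type) [Ring A] [Algebra F A]
    [FiniteDimensional F A] [Algebra.IsCentral F A] [IsSimpleRing A] :
    ∃ n : ℕ, Nonempty (A ≃ₐ[F] Matrix (Fin n) (Fin n) F) := by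
  classical
  haveI : IsArtinian A A := isArtinian_of_tower F inferInstance
  haveI : IsSemisimpleRing A := isSemisimpleRing_of_simple_artinian A
  have tf := IsSemisimpleModule.finite_tfae (R := A) (M := A)
  obtain ⟨t, tfin, tind, tsup, tsimple⟩ := (tf.out 0 4).mp (Module.Finite.self A)
  haveI := tfin.to_subtype
  haveI : Fintype t := Fintype.ofFinite t
  have htne : t.Nonempty := by
    rcases Set.eq_empty_or_nonempty t with h | h
    · exfalso
      rw [h, sSup_empty] at tsup
      exact bot_ne_top tsup
    · exact h
  haveI : Nonempty t := htne.to_subtype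
  obtain ⟨I, hIt⟩ := htne
  haveI hsimp : ∀ m : t, IsSimpleModule A ↥(m : Submodule A A) := fun m => tsimple m m.2
  haveI : IsSimpleModule A ↥I := tsimple I hIt
  -- A ≃ₗ[A] (t → I)
  have internal : DirectSum.IsInternal (fun m : t => (m : Submodule A A)) :=
    DirectSum.isInternal_submodule_of_iSupIndep_of_iSup_eq_top
      ((sSupIndep_iff t).mp tind) (by rw [← sSup_eq_iSup']; exact tsup)
  let e1 : A ≃ₗ[A] DirectSum t (fun m : t => ↥(m : Submodule A A)) :=
    (LinearEquiv.ofBijective (DirectSum.coeLinearMap _) internal).symm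
  let g : ∀ m : t, ↥(m : Submodule A A) ≃ₗ[A] ↥I :=
    fun m => (simple_submodules_iso A (m : Submodule A A) I).some
  let e2 : DirectSum t (fun m : t => ↥(m : Submodule A A)) ≃ₗ[A] DirectSum t (fun _ : t => ↥I) :=
    DFinsupp.mapRange.linearEquiv g
  let e3 : DirectSum t (fun _ : t => ↥I) ≃ₗ[A] (t → ↥I) := DirectSum.linearEquivFunOnFintype A t (fun _ => ↥I)
  let e : A ≃ₗ[A] (t → ↥I) := (e1.trans e2).trans e3
  -- endomorphism rings
  let D := Module.End A ↥I
  letI : DivisionRing D := Module.End.instDivisionRing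
  let r1 : Aᵐᵒᵖ ≃+* Matrix t t D :=
    ((RingEquiv.moduleEndSelf A).trans e.endRingEquiv).trans (endVecRingEquivMatrixEnd t A ↥I)
  let r2 : A ≃+* Matrix t t Dᵐᵒᵖ :=
    (((RingEquiv.opOp A).trans r1.op).trans (RingEquiv.mopMatrix).symm)
  -- finiteness
  haveI : Finite A := by
    have := (Module.finBasis F A).equivFun
    exact Finite.of_equiv _ this.symm.toEquiv
  haveI : Finite ↥I := Subtype.finite
  haveI : Finite D := Finite.of_injective (fun f => (f : ↥I → ↥I)) DFunLike.coe_injective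
  haveI : Finite Dᵐᵒᵖ := Finite.of_equiv D MulOpposite.opEquiv
  let E := Dᵐᵒᵖ
  letI : Field E := littleWedderburn E
  -- reindex
  set k := Fintype.card t with hk
  let r3 : Matrix t t E ≃+* Matrix (Fin k) (Fin k) E :=
    (Matrix.reindexAlgEquiv ℕ E (Fintype.equivFin t)).toRingEquiv
  let gAE : A ≃+* Matrix (Fin k) (Fin k) E := r2.trans r3
  haveI : Nonempty (Fin k) := ⟨(Fintype.equivFin t) (Classical.arbitrary t)⟩
  -- the center: build ψ : F ≃+* E
  have hcentral : ∀ c : F, ∀ X : Matrix (Fin k) (Fin k) E,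
      gAE (algebraMap F A c) * X = X * gAE (algebraMap F A c) := by
    intro c X
    have := Algebra.commutes c (gAE.symm X)
    calc gAE (algebraMap F A c) * X = gAE (algebraMap F A c * gAE.symm X) := by
          rw [map_mul, gAE.apply_symm_apply]
      _ = gAE (gAE.symm X * algebraMap F A c) := by rw [this]
      _ = X * gAE (algebraMap F A c) := by rw [map_mul, gAE.apply_symm_apply]
  have hscalar : ∀ c : F, gAE (algebraMap F A c) ∈ Set.range (Matrix.scalar (Fin k)) := by
    intro c
    exact Matrix.mem_range_scalar_of_commute_single
      (fun i j _ => (hcentral c _).symm)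
  let ψ : F → E := fun c => (hscalar c).choose
  have hψ : ∀ c : F, gAE (algebraMap F A c) = Matrix.scalar (Fin k) (ψ c) :=
    fun c => ((hscalar c).choose_spec).symm
  have hscalar_inj : Function.Injective (Matrix.scalar (Fin k) (α := E)) := by
    intro x y h
    simpa using Matrix.ext_iff.mpr h (Classical.arbitrary _) (Classical.arbitrary _)
  have hψ_hom : ∀ a b : F, ψ (a * b) = ψ a * ψ b := by
    intro a b
    apply hscalar_inj
    calc Matrix.scalar (Fin k) (ψ (a * b)) = gAE (algebraMap F A (a * b)) := (hψ _).symm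
      _ = gAE (algebraMap F A a) * gAE (algebraMap F A b) := by rw [map_mul, map_mul]
      _ = Matrix.scalar (Fin k) (ψ a) * Matrix.scalar (Fin k) (ψ b) := by rw [hψ, hψ]
      _ = Matrix.scalar (Fin k) (ψ a * ψ b) := (map_mul _ _ _).symm
  have hψ_add : ∀ a b : F, ψ (a + b) = ψ a + ψ b := by
    intro a b
    apply hscalar_inj
    calc Matrix.scalar (Fin k) (ψ (a + b)) = gAE (algebraMap F A (a + b)) := (hψ _).symm
      _ = gAE (algebraMap F A a) + gAE (algebraMap F A b) := by rw [map_add, map_add]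
      _ = Matrix.scalar (Fin k) (ψ a) + Matrix.scalar (Fin k) (ψ b) := by rw [hψ, hψ]
      _ = Matrix.scalar (Fin k) (ψ a + ψ b) := (map_add _ _ _).symm
  have hψ_one : ψ 1 = 1 := by
    apply hscalar_inj
    calc Matrix.scalar (Fin k) (ψ 1) = gAE (algebraMap F A 1) := (hψ _).symm
      _ = 1 := by rw [map_one, map_one]
      _ = Matrix.scalar (Fin k) 1 := (map_one _).symm
  let ψh : F →+* E :=
    { toFun := ψ, map_one' := hψ_one, map_mul' := hψ_hom, map_add' := hψ_add,
      map_zero' := by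
        apply hscalar_inj
        calc Matrix.scalar (Fin k) (ψ 0) = gAE (algebraMap F A 0) := (hψ _).symm
          _ = 0 := by rw [map_zero, map_zero]
          _ = Matrix.scalar (Fin k) 0 := (map_zero _).symm }
  have hψ_surj : Function.Surjective ψ := by
    intro x
    have hXc : ∀ Y : Matrix (Fin k) (Fin k) E,
        Matrix.scalar (Fin k) x * Y = Y * Matrix.scalar (Fin k) x := by
      intro Y
      ext i j
      simp [Matrix.scalar, Matrix.mul_apply, Matrix.diagonal, mul_comm]
    have hbc : ∀ a : A, gAE.symm (Matrix.scalar (Fin k) x) * a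
        = a * gAE.symm (Matrix.scalar (Fin k) x) := by
      intro a
      apply gAE.injective
      rw [map_mul, map_mul, gAE.apply_symm_apply, ← hXc]
    have : gAE.symm (Matrix.scalar (Fin k) x) ∈ Subalgebra.center F A :=
      Subalgebra.mem_center_iff.mpr (fun a => (hbc a).symm)
    obtain ⟨c, hc⟩ := (Algebra.IsCentral.mem_center_iff F).mp this
    refine ⟨c, hscalar_inj ?_⟩
    rw [← hψ c, ← hc, gAE.apply_symm_apply]
  have hψ_inj : Function.Injective ψh := ψh.injective
  let ψe : F ≃+* E := RingEquiv.ofBijective ψh ⟨hψ_inj, hψ_surj⟩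
  -- final algebra equivalence
  let gF : A ≃+* Matrix (Fin k) (Fin k) F := gAE.trans (RingEquiv.mapMatrix ψe.symm)
  refine ⟨k, ⟨AlgEquiv.ofRingEquiv (f := gF) ?_⟩⟩
  intro c
  show (RingEquiv.mapMatrix ψe.symm) (gAE (algebraMap F A c)) = _
  rw [hψ c]
  ext i j
  simp only [RingEquiv.mapMatrix_apply, Matrix.map_apply, Matrix.scalar_apply,
    Matrix.algebraMap_matrix_apply, Matrix.diagonal_apply]
  split_ifs
  · exact ψe.symm_apply_apply c
  · exact map_zero _


/-- Wedderburn: every central simple algebra over a finite field F is a matrix algebra over F;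
consequently every form of Matₙ(F) (an algebra becoming isomorphic to Matₙ over some field
extension) is isomorphic to Matₙ(F). -/
theorem central_simple_over_finite_field (F : Type) [Field F] [Finite F]
    (A : Type) [Ring A] [Algebra F A] [FiniteDimensional F A]
    [Algebra.IsCentral F A] [IsSimpleRing A] :
    (∃ n : ℕ, Nonempty (A ≃ₐ[F] Matrix (Fin n) (Fin n) F)) ∧
    (∀ (n : ℕ) (K : Type) [Field K] [Algebra F K],
      Nonempty ((K ⊗[F] A) ≃ₐ[K] Matrix (Fin n) (Fin n) K) →
      Nonempty (A ≃ₐ[F] Matrix (Fin n) (Fin n) F)) := by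
  obtain ⟨m, ⟨em⟩⟩ := key F A
  refine ⟨⟨m, ⟨em⟩⟩, ?_⟩
  intro n K _ _ ⟨en⟩
  have h1 : finrank F A = m * m := by
    rw [em.toLinearEquiv.finrank_eq]
    simp [Module.finrank_matrix]
  have h3 : finrank K (K ⊗[F] A) = n * n := by
    rw [en.toLinearEquiv.finrank_eq]
    simp [Module.finrank_matrix]
  have h2 : finrank K (K ⊗[F] A) = finrank F A := Module.finrank_baseChange
  have hmn : m = n := Nat.mul_self_inj.mp (by omega)
  exact ⟨hmn ▸ em⟩
end

section
/- Let F be an infinite field and let A = Mat_{d_1}(F) × ... × Mat_{d_r}(F) be a finite product of matrix algebras over F. Then A can be generated by two elements as a non-unital F-algebra. -/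
open TensorProduct

theorem aux_aeval_mem {F A : Type*} [CommSemiring F] [Semiring A] [Algebra F A]
    (B : Submodule F A) (hB : ∀ a ∈ B, ∀ b ∈ B, a * b ∈ B)
    {x : A} (hx : x ∈ B) {p : Polynomial F} (hp : p.coeff 0 = 0) :
    Polynomial.aeval x p ∈ B := by
  have hpow : ∀ n : ℕ, 0 < n → x ^ n ∈ B := by
    intro n hn
    induction n with
    | zero => omega
    | succ m ih =>
      rcases Nat.eq_zero_or_pos m with h | h
      · simpa [h] using hx
      · rw [pow_succ]; exact hB _ (ih h) _ hx
  rw [Polynomial.aeval_eq_sum_range]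
  refine Submodule.sum_mem _ fun i _ => ?_
  rcases Nat.eq_zero_or_pos i with h | h
  · simp [h, hp]
  · exact Submodule.smul_mem _ _ (hpow i h)

theorem aux_aeval_diagonal {F : Type*} [CommSemiring F] {n : Type*} [Fintype n] [DecidableEq n]
    (d : n → F) (p : Polynomial F) :
    Polynomial.aeval (Matrix.diagonal d) p
      = Matrix.diagonal fun k => Polynomial.eval (d k) p := by
  induction p using Polynomial.induction_on' with
  | add p q hp hq => simp [hp, hq, Matrix.diagonal_add]
  | monomial m a =>
    simp [Polynomial.aeval_monomial, Matrix.algebraMap_eq_diagonal, Matrix.diagonal_pow,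
      Matrix.diagonal_mul_diagonal, Pi.algebraMap_def, Algebra.algebraMap_self_apply]

theorem aux_sandwich {F : Type*} [Semiring F] {n : Type*} [Fintype n] [DecidableEq n] (k l : n) :
    Matrix.single k k (1:F) * (Matrix.of fun _ _ => (1:F)) * Matrix.single l l 1
      = Matrix.single k l 1 := by
  ext a b
  by_cases hb : b = l
  · subst hb
    rw [Matrix.mul_single_apply_same]
    by_cases ha : a = k
    · subst ha
      rw [Matrix.single_mul_apply_same]
      simp only [Matrix.single, Matrix.of_apply, one_mul, mul_one]
      simp
    · rw [Matrix.single_mul_apply_of_ne (h := ha), zero_mul]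
      simp only [Matrix.single, Matrix.of_apply]
      rw [if_neg (fun h => ha h.1.symm)]
  · rw [Matrix.mul_single_apply_of_ne (hbj := hb)]
    simp only [Matrix.single, Matrix.of_apply]
    rw [if_neg (fun h => hb h.2.symm)]

theorem aux_diag_single {F : Type*} [Semiring F] {n : Type*} [DecidableEq n] (k0 : n)
    (f : n → F) (hf : ∀ k, f k = if k = k0 then 1 else 0) :
    Matrix.diagonal f = Matrix.single k0 k0 1 := by
  ext a b
  rw [Matrix.diagonal_apply, hf]
  clear hf
  simp only [Matrix.single, Matrix.of_apply]
  split_ifs <;> aesop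


/-- A finite product of matrix algebras over an infinite field F can be generated by two
elements as a non-unital F-algebra. -/
theorem product_of_matrix_algebras_two_generators (F : Type) [Field F] [Infinite F]
    (r : ℕ) (dims : Fin r → ℕ) :
    ∃ x y : (∀ i : Fin r, Matrix (Fin (dims i)) (Fin (dims i)) F),
      GeneratesAsNonUnitalAlgebra F ({x, y} :
        Set (∀ i : Fin r, Matrix (Fin (dims i)) (Fin (dims i)) F)) := by
  classical
  set A := ∀ i : Fin r, Matrix (Fin (dims i)) (Fin (dims i)) F with hA
  -- the index type of all "eigenvalue slots"
  set S := (i : Fin r) × Fin (dims i) with hS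
  -- an injection of S into nonzero elements of F
  haveI : Infinite ({(0:F)}ᶜ : Set F) := ((Set.finite_singleton (0:F)).infinite_compl).to_subtype
  let emb : S ↪ ({(0:F)}ᶜ : Set F) :=
    (Fintype.equivFin S).toEmbedding.trans
      (Fin.valEmbedding.trans (Infinite.natEmbedding _))
  let μ : S → F := fun j => (emb j : F)
  have hμinj : Function.Injective μ := fun a b h => emb.injective (Subtype.ext h)
  have hμne : ∀ j, μ j ≠ 0 := fun j => (emb j).2
  -- extend to Option S with value 0 at none
  let ν : Option S → F := fun o => o.elim 0 μ
  have hνinj : Function.Injective ν := by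
    rintro (_ | a) (_ | b) h
    · rfl
    · exact absurd h.symm (hμne b)
    · exact absurd h (hμne a)
    · exact congrArg some (hμinj h)
  -- the generators
  refine ⟨fun i => Matrix.diagonal fun k => μ ⟨i, k⟩, fun i => Matrix.of fun _ _ => (1:F), ?_⟩
  set x : A := fun i => Matrix.diagonal fun k => μ ⟨i, k⟩ with hxdef
  set y : A := fun i => Matrix.of fun _ _ => (1:F) with hydef
  intro B hsub hmul
  have hx : x ∈ B := hsub (by simp)
  have hy : y ∈ B := hsub (by simp)
  -- Lagrange interpolation polynomials
  let P : S → Polynomial F := fun j0 => Lagrange.basis Finset.univ ν (some j0)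
  have hP0 : ∀ j0, (P j0).coeff 0 = 0 := by
    intro j0
    rw [Polynomial.coeff_zero_eq_eval_zero]
    have : (0:F) = ν none := rfl
    rw [this]
    exact Lagrange.eval_basis_of_ne (by simp) (Finset.mem_univ _)
  have hPeval : ∀ j0 j : S, Polynomial.eval (μ j) (P j0) = if j = j0 then 1 else 0 := by
    intro j0 j
    split_ifs with h
    · subst h
      have h2 : μ j = ν (some j) := rfl
      rw [h2]
      exact Lagrange.eval_basis_self (hνinj.injOn) (Finset.mem_univ _)
    · have : μ j = ν (some j) := rfl
      rw [this]
      exact Lagrange.eval_basis_of_ne (by simp [Ne.symm h]) (Finset.mem_univ _)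
  -- componentwise aeval
  have hcomp : ∀ (q : Polynomial F) (i : Fin r),
      (Polynomial.aeval x q) i = Polynomial.aeval (x i) q := fun q i =>
    (Polynomial.aeval_algHom_apply (Pi.evalAlgHom F _ i) x q).symm
  -- diagonal units are in B
  have hE : ∀ j0 : S, (Pi.single j0.1 (Matrix.single j0.2 j0.2 (1:F)) : A) ∈ B := by
    rintro ⟨i0, k0⟩
    have hmem := aux_aeval_mem B hmul hx (hP0 ⟨i0, k0⟩)
    have heq : Polynomial.aeval x (P ⟨i0, k0⟩)
        = (Pi.single i0 (Matrix.single k0 k0 (1:F)) : A) := by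
      funext i
      rw [hcomp]
      show Polynomial.aeval (Matrix.diagonal fun k => μ ⟨i, k⟩) (P ⟨i0, k0⟩) = _
      rw [aux_aeval_diagonal]
      by_cases h : i = i0
      · subst h
        rw [Pi.single_eq_same]
        refine aux_diag_single k0 _ fun k => ?_
        rw [hPeval]
        by_cases hk : k = k0
        · subst hk; simp
        · rw [if_neg hk, if_neg (show ¬(⟨i, k⟩ : S) = ⟨i, k0⟩ from
            fun h => hk (eq_of_heq (Sigma.mk.inj_iff.mp h).2))]
      · rw [Pi.single_eq_of_ne h]
        have : (fun k => Polynomial.eval (μ ⟨i, k⟩) (P ⟨i0, k0⟩)) = fun _ => (0:F) := by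
          funext k
          rw [hPeval]
          rw [if_neg]
          intro hc
          exact h (congrArg Sigma.fst hc)
        rw [this]
        exact Matrix.diagonal_zero
    rw [← heq]
    exact hmem
  -- all std basis elements are in B via sandwiching with y
  have hStd : ∀ (i0 : Fin r) (k l : Fin (dims i0)),
      (Pi.single i0 (Matrix.single k l (1:F)) : A) ∈ B := by
    intro i0 k l
    have hm := hmul _ (hmul _ (hE ⟨i0, k⟩) _ hy) _ (hE ⟨i0, l⟩)
    have heq : (Pi.single i0 (Matrix.single k k (1:F)) : A) * y
          * Pi.single i0 (Matrix.single l l (1:F))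
        = Pi.single i0 (Matrix.single k l (1:F)) := by
      funext i
      rw [Pi.mul_apply, Pi.mul_apply]
      by_cases h : i = i0
      · subst h
        rw [Pi.single_eq_same, Pi.single_eq_same, Pi.single_eq_same]
        exact aux_sandwich k l
      · rw [Pi.single_eq_of_ne h, Pi.single_eq_of_ne h, Pi.single_eq_of_ne h, zero_mul, zero_mul]
    rw [← heq]
    exact hm
  -- conclude
  rw [eq_top_iff]
  intro z _
  have hz : z = ∑ i : Fin r, ∑ k : Fin (dims i), ∑ l : Fin (dims i),
      (z i k l) • (Pi.single i (Matrix.single k l (1:F)) : A) := by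
    funext i'
    simp only [Finset.sum_apply, Pi.smul_apply]
    rw [Finset.sum_eq_single i']
    · simp only [Pi.single_eq_same]
      conv_lhs => rw [Matrix.matrix_eq_sum_single (z i')]
      refine Finset.sum_congr rfl fun k _ => Finset.sum_congr rfl fun l _ => ?_
      rw [Matrix.smul_single, smul_eq_mul, mul_one]
    · intro i _ hne
      simp [Pi.single_eq_of_ne (Ne.symm hne)]
    · intro h
      exact absurd (Finset.mem_univ i') h
  rw [hz]
  exact Submodule.sum_mem _ fun i _ => Submodule.sum_mem _ fun k _ =>
    Submodule.sum_mem _ fun l _ => Submodule.smul_mem _ _ (hStd i k l)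
end
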